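/- arXiv:1412.3681 — 8 statements merged into one kernel-verified Lean document; each statement's English description precedes it below -/
import Mathlib

section
/- Let (F_n)_{n∈ℕ} be a sequence of Möbius functions F_n(V) = (a_n V + b_n)/(c_n V + d_n) with complex coefficients satisfying a_n d_n − b_n c_n ≠ 0, such that for every V ∈ ℝ the denominator c_n V + d_n is nonzero, Im F_n(V) ≥ 0, and the sequence (Im F_n(V))_{n∈ℕ} converges to a limit in [0, ∞] (the value +∞ being allowed). Then the limit lim_{n→∞} Im F_n(V) is finite or infinite simultaneously for all except at most one value of V ∈ ℝ; that is, either the set {V ∈ ℝ : lim_{n→∞} Im F_n(V) = ∞} has at most one element, or the set {V ∈ ℝ : lim_{n→∞} Im F_n(V) < ∞} has at most one element. -/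
open Filter Topology
open scoped ENNReal

/-- The leading coefficient of a quadratic that is nonnegative on ℝ is nonnegative. -/
lemma stmt0_quadA (A B C : ℝ) (h : ∀ s : ℝ, 0 ≤ A*s^2+B*s+C) : 0 ≤ A := by
  by_contra hA
  push_neg at hA
  have hC : 0 ≤ C := by have := h 0; nlinarith
  set s : ℝ := Real.sqrt ((C+1)/(-A)) with hs
  have hs2 : s^2 = (C+1)/(-A) := Real.sq_sqrt (by
    apply div_nonneg (by linarith) (by linarith))
  have h1 := h s
  have h2 := h (-s)
  have hA' : A ≠ 0 := ne_of_lt hA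
  have : A * s^2 = -(C+1) := by rw [hs2]; field_simp [hA']
  nlinarith

/-- The value of a nonnegative quadratic at any point is controlled by the sum of its
values at two fixed distinct points, with a constant independent of the quadratic. -/
lemma stmt0_key (u v t : ℝ) (huv : u ≠ v) :
    ∃ K : ℝ, 0 < K ∧ ∀ A B C : ℝ, (∀ s : ℝ, 0 ≤ A*s^2+B*s+C) →
      A*t^2+B*t+C ≤ K * ((A*u^2+B*u+C) + (A*v^2+B*v+C)) := by
  have hne : u - v ≠ 0 := sub_ne_zero.mpr huv
  set lam : ℝ := (t - v)/(u - v) with hlam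
  set mu : ℝ := (u - t)/(u - v) with hmu
  set al : ℝ := |lam| with hal
  set am : ℝ := |mu| with ham
  refine ⟨al + am + 2*(al*am) + 1, by positivity, ?_⟩
  intro A B C hf
  have hA : 0 ≤ A := stmt0_quadA A B C hf
  have hfu := hf u
  have hfv := hf v
  have hmid : A*(u-v)^2 ≤ 2*((A*u^2+B*u+C) + (A*v^2+B*v+C)) := by
    have := hf ((u+v)/2); nlinarith
  have hid : A*t^2+B*t+C
      = lam*(A*u^2+B*u+C) + mu*(A*v^2+B*v+C) - lam*mu*(A*(u-v)^2) := by
    rw [hlam, hmu]; field_simp; ring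
  have hall : lam ≤ al := le_abs_self lam
  have hamm : mu ≤ am := le_abs_self mu
  have hal0 : 0 ≤ al := abs_nonneg lam
  have ham0 : 0 ≤ am := abs_nonneg mu
  have e1 : lam*(A*u^2+B*u+C) ≤ al*(A*u^2+B*u+C) :=
    mul_le_mul_of_nonneg_right hall hfu
  have e2 : mu*(A*v^2+B*v+C) ≤ am*(A*v^2+B*v+C) :=
    mul_le_mul_of_nonneg_right hamm hfv
  have e3 : 0 ≤ al*(A*v^2+B*v+C) := mul_nonneg hal0 hfv
  have e4 : 0 ≤ am*(A*u^2+B*u+C) := mul_nonneg ham0 hfu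
  have e5 : 0 ≤ (al*am)*((A*u^2+B*u+C)+(A*v^2+B*v+C)) :=
    mul_nonneg (mul_nonneg hal0 ham0) (add_nonneg hfu hfv)
  have hAuv : 0 ≤ A*(u-v)^2 := mul_nonneg hA (sq_nonneg _)
  rcases le_or_gt 0 (lam*mu) with hc | hc
  · have e6 : 0 ≤ lam*mu*(A*(u-v)^2) := mul_nonneg hc hAuv
    nlinarith
  · have h1 : -(lam*mu) ≤ al*am := by
      rw [← abs_mul]; exact neg_le_abs _
    have e6 : (-(lam*mu)) * (A*(u-v)^2)
        ≤ (al*am) * (2*((A*u^2+B*u+C) + (A*v^2+B*v+C))) :=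
      mul_le_mul h1 hmid hAuv (mul_nonneg hal0 ham0)
    nlinarith

/-- Expansion of `normSq (c s + d)` as a real quadratic in `s`. -/
lemma stmt0_Prep (c d : ℂ) (s : ℝ) : Complex.normSq (c*s + d)
    = (c.re^2 + c.im^2)*s^2 + (2*(c.re*d.re + c.im*d.im))*s + (d.re^2 + d.im^2) := by
  simp [Complex.normSq_apply, Complex.add_re, Complex.add_im, Complex.mul_re,
    Complex.mul_im, Complex.ofReal_re, Complex.ofReal_im]
  ring

/-- Expansion of `Im ((a s + b)/(c s + d)) * normSq (c s + d)` as a real quadratic in `s`. -/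
lemma stmt0_Qrep (a b c d : ℂ) (s : ℝ) (hden : c*s+d ≠ 0) :
    ((a*s+b)/(c*s+d)).im * Complex.normSq (c*s+d)
    = (a.im*c.re - a.re*c.im)*s^2
      + (a.im*d.re - a.re*d.im + b.im*c.re - b.re*c.im)*s
      + (b.im*d.re - b.re*d.im) := by
  have h0 : Complex.normSq (c*↑s+d) ≠ 0 := by
    simpa [Complex.normSq_eq_zero] using hden
  rw [Complex.div_im]
  rw [sub_mul, div_mul_cancel₀ _ h0, div_mul_cancel₀ _ h0]
  simp [Complex.mul_re, Complex.mul_im]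
  ring

/-- If `ofReal ∘ f` tends to `⊤`, then `f` tends to `atTop`. -/
lemma stmt0_toTop (f : ℕ → ℝ)
    (h : Tendsto (fun n => ENNReal.ofReal (f n)) atTop (𝓝 ⊤)) :
    Tendsto f atTop atTop := by
  rw [tendsto_atTop]
  intro M
  have hev := h.eventually
    (lt_mem_nhds (show ENNReal.ofReal M < ⊤ from ENNReal.ofReal_lt_top))
  filter_upwards [hev] with n hn
  by_contra hc
  push_neg at hc
  exact absurd hn (not_lt.mpr (ENNReal.ofReal_le_ofReal hc.le))

/-- If `ofReal ∘ f` tends to a finite limit and `f` is nonnegative,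
then `f` is eventually bounded. -/
lemma stmt0_bdd (f : ℕ → ℝ) (hf : ∀ n, 0 ≤ f n) (L : ℝ≥0∞) (hL : L ≠ ⊤)
    (h : Tendsto (fun n => ENNReal.ofReal (f n)) atTop (𝓝 L)) :
    ∀ᶠ n in atTop, f n ≤ (L+1).toReal := by
  have hL1 : L + 1 ≠ ⊤ := ENNReal.add_ne_top.mpr ⟨hL, ENNReal.one_ne_top⟩
  have hev := h.eventually (gt_mem_nhds (ENNReal.lt_add_right hL one_ne_zero))
  filter_upwards [hev] with n hn
  have h2 := ENNReal.toReal_mono hL1 hn.le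
  rwa [ENNReal.toReal_ofReal (hf n)] at h2

set_option maxHeartbeats 1000000 in
/-- For a sequence of Möbius functions `Fₙ(V) = (aₙV+bₙ)/(cₙV+dₙ)` with
nonvanishing determinant, real-nonvanishing denominators, nonnegative imaginary parts on ℝ,
and convergent imaginary parts (in `[0,∞]`), the limit is finite or infinite simultaneously
for all but at most one real `V`. -/
theorem stmt0 (a b c d : ℕ → ℂ)
    (hdet : ∀ n, a n * d n - b n * c n ≠ 0)
    (F : ℕ → ℝ → ℂ)
    (hF : ∀ n (V : ℝ), F n V = (a n * (V : ℂ) + b n) / (c n * (V : ℂ) + d n))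
    (hden : ∀ n (V : ℝ), c n * (V : ℂ) + d n ≠ 0)
    (him : ∀ n (V : ℝ), 0 ≤ (F n V).im)
    (hconv : ∀ V : ℝ, ∃ L : ℝ≥0∞,
      Tendsto (fun n => ENNReal.ofReal ((F n V).im)) atTop (𝓝 L)) :
    {V : ℝ | Tendsto (fun n => ENNReal.ofReal ((F n V).im)) atTop (𝓝 ⊤)}.Subsingleton ∨
    {V : ℝ | ∃ L : ℝ≥0∞, L ≠ ⊤ ∧
      Tendsto (fun n => ENNReal.ofReal ((F n V).im)) atTop (𝓝 L)}.Subsingleton := by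
  by_contra hcon
  push_neg at hcon
  obtain ⟨h1, h2⟩ := hcon
  obtain ⟨V1, hV1, V2, hV2, hV12⟩ := h1
  obtain ⟨W1, hW1, W2, hW2, hW12⟩ := h2
  simp only [Set.mem_setOf_eq] at hV1 hV2 hW1 hW2
  obtain ⟨L1, hL1top, hL1⟩ := hW1
  obtain ⟨L2, hL2top, hL2⟩ := hW2
  -- quadratic representations
  obtain ⟨Aq, Bq, Cq, hqrep⟩ : ∃ A B C : ℕ → ℝ, ∀ n (s : ℝ),
      A n*s^2+B n*s+C n = (F n s).im * Complex.normSq (c n*↑s + d n) :=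
    ⟨fun n => (a n).im*(c n).re - (a n).re*(c n).im,
     fun n => (a n).im*(d n).re - (a n).re*(d n).im
        + (b n).im*(c n).re - (b n).re*(c n).im,
     fun n => (b n).im*(d n).re - (b n).re*(d n).im,
     fun n s => by
      rw [hF n s]
      exact (stmt0_Qrep (a n) (b n) (c n) (d n) s (hden n s)).symm⟩
  obtain ⟨Ap, Bp, Cp, hprep⟩ : ∃ A B C : ℕ → ℝ, ∀ n (s : ℝ),
      A n*s^2+B n*s+C n = Complex.normSq (c n*↑s + d n) :=
    ⟨fun n => (c n).re^2 + (c n).im^2,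
     fun n => 2*((c n).re*(d n).re + (c n).im*(d n).im),
     fun n => (d n).re^2 + (d n).im^2,
     fun n s => (stmt0_Prep (c n) (d n) s).symm⟩
  have hqnn : ∀ n (s : ℝ), 0 ≤ Aq n*s^2+Bq n*s+Cq n := fun n s => by
    rw [hqrep]; exact mul_nonneg (him n s) (Complex.normSq_nonneg _)
  have hpnn : ∀ n (s : ℝ), 0 ≤ Ap n*s^2+Bp n*s+Cp n := fun n s => by
    rw [hprep]; exact Complex.normSq_nonneg _
  have hppos : ∀ n (s : ℝ), 0 < Ap n*s^2+Bp n*s+Cp n := fun n s => by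
    rw [hprep]; exact Complex.normSq_pos.mpr (hden n s)
  have hqp : ∀ n (s : ℝ),
      Aq n*s^2+Bq n*s+Cq n = (F n s).im * (Ap n*s^2+Bp n*s+Cp n) := fun n s => by
    rw [hqrep, hprep]
  -- key constants
  obtain ⟨K1, hK1, hKq1⟩ := stmt0_key W1 W2 V1 hW12
  obtain ⟨K2, hK2, hKq2⟩ := stmt0_key W1 W2 V2 hW12
  obtain ⟨J1, hJ1, hKp1⟩ := stmt0_key V1 V2 W1 hV12
  obtain ⟨J2, hJ2, hKp2⟩ := stmt0_key V1 V2 W2 hV12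
  -- uniform eventual bound at W1, W2
  set M : ℝ := max ((L1+1).toReal) ((L2+1).toReal) + 1 with hMdef
  have hM : 0 < M := by
    have h0 : (0:ℝ) ≤ max ((L1+1).toReal) ((L2+1).toReal) :=
      le_max_of_le_left ENNReal.toReal_nonneg
    linarith
  have hbW1 : ∀ᶠ n in atTop, (F n W1).im ≤ M := by
    filter_upwards [stmt0_bdd _ (fun n => him n W1) L1 hL1top hL1] with n hn
    have := le_max_left ((L1+1).toReal) ((L2+1).toReal)
    linarith
  have hbW2 : ∀ᶠ n in atTop, (F n W2).im ≤ M := by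
    filter_upwards [stmt0_bdd _ (fun n => him n W2) L2 hL2top hL2] with n hn
    have := le_max_right ((L1+1).toReal) ((L2+1).toReal)
    linarith
  -- divergence at V1, V2
  have hT1 : Tendsto (fun n => (F n V1).im) atTop atTop := stmt0_toTop _ hV1
  have hT2 : Tendsto (fun n => (F n V2).im) atTop atTop := stmt0_toTop _ hV2
  set CC : ℝ := (K1+K2)*M*(J1+J2) with hCCdef
  have hCC : 0 < CC :=
    mul_pos (mul_pos (by linarith) hM) (by linarith)
  have hev1 := hT1.eventually_gt_atTop (2*CC)
  have hev2 := hT2.eventually_gt_atTop (2*CC)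
  obtain ⟨n, ⟨hb1, hb2⟩, hg1, hg2⟩ := ((hbW1.and hbW2).and (hev1.and hev2)).exists
  -- abbreviations for values at n
  have p1 : 0 < Ap n*V1^2+Bp n*V1+Cp n := hppos n V1
  have p2 : 0 < Ap n*V2^2+Bp n*V2+Cp n := hppos n V2
  have pw1 : 0 ≤ Ap n*W1^2+Bp n*W1+Cp n := hpnn n W1
  have pw2 : 0 ≤ Ap n*W2^2+Bp n*W2+Cp n := hpnn n W2
  -- q at W_i bounded by M * p at W_i
  have cw1 : Aq n*W1^2+Bq n*W1+Cq n ≤ M*(Ap n*W1^2+Bp n*W1+Cp n) := by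
    rw [hqp n W1]; exact mul_le_mul_of_nonneg_right hb1 pw1
  have cw2 : Aq n*W2^2+Bq n*W2+Cq n ≤ M*(Ap n*W2^2+Bp n*W2+Cp n) := by
    rw [hqp n W2]; exact mul_le_mul_of_nonneg_right hb2 pw2
  -- p at W_i bounded by J_i * (p at V1 + p at V2)
  have cp1 := hKp1 (Ap n) (Bp n) (Cp n) (hpnn n)
  have cp2 := hKp2 (Ap n) (Bp n) (Cp n) (hpnn n)
  -- q at V_i bounded by K_i * (q at W1 + q at W2)
  have cq1 := hKq1 (Aq n) (Bq n) (Cq n) (hqnn n)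
  have cq2 := hKq2 (Aq n) (Bq n) (Cq n) (hqnn n)
  set S : ℝ := (Ap n*V1^2+Bp n*V1+Cp n) + (Ap n*V2^2+Bp n*V2+Cp n) with hSdef
  have hS : 0 < S := by rw [hSdef]; linarith
  have chain1 : (F n V1).im * (Ap n*V1^2+Bp n*V1+Cp n) ≤ CC * S := by
    rw [← hqp n V1]
    have s1 : M*(Ap n*W1^2+Bp n*W1+Cp n) ≤ M*(J1*S) :=
      mul_le_mul_of_nonneg_left cp1 hM.le
    have s2 : M*(Ap n*W2^2+Bp n*W2+Cp n) ≤ M*(J2*S) :=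
      mul_le_mul_of_nonneg_left cp2 hM.le
    have s3 : K1*((Aq n*W1^2+Bq n*W1+Cq n) + (Aq n*W2^2+Bq n*W2+Cq n))
        ≤ K1*(M*(J1*S) + M*(J2*S)) :=
      mul_le_mul_of_nonneg_left (by linarith) hK1.le
    have s4 : K1*(M*(J1*S) + M*(J2*S)) ≤ CC * S := by
      have h5 : 0 ≤ K2*(M*((J1+J2)*S)) :=
        mul_nonneg hK2.le (mul_nonneg hM.le
          (mul_nonneg (by linarith) hS.le))
      rw [hCCdef]; nlinarith
    linarith
  have chain2 : (F n V2).im * (Ap n*V2^2+Bp n*V2+Cp n) ≤ CC * S := by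
    rw [← hqp n V2]
    have s1 : M*(Ap n*W1^2+Bp n*W1+Cp n) ≤ M*(J1*S) :=
      mul_le_mul_of_nonneg_left cp1 hM.le
    have s2 : M*(Ap n*W2^2+Bp n*W2+Cp n) ≤ M*(J2*S) :=
      mul_le_mul_of_nonneg_left cp2 hM.le
    have s3 : K2*((Aq n*W1^2+Bq n*W1+Cq n) + (Aq n*W2^2+Bq n*W2+Cq n))
        ≤ K2*(M*(J1*S) + M*(J2*S)) :=
      mul_le_mul_of_nonneg_left (by linarith) hK2.le
    have s4 : K2*(M*(J1*S) + M*(J2*S)) ≤ CC * S := by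
      have h5 : 0 ≤ K1*(M*((J1+J2)*S)) :=
        mul_nonneg hK1.le (mul_nonneg hM.le
          (mul_nonneg (by linarith) hS.le))
      rw [hCCdef]; nlinarith
    linarith
  have low1 : (2*CC)*(Ap n*V1^2+Bp n*V1+Cp n)
      < (F n V1).im * (Ap n*V1^2+Bp n*V1+Cp n) :=
    mul_lt_mul_of_pos_right hg1 p1
  have low2 : (2*CC)*(Ap n*V2^2+Bp n*V2+Cp n)
      < (F n V2).im * (Ap n*V2^2+Bp n*V2+Cp n) :=
    mul_lt_mul_of_pos_right hg2 p2
  have r1 : CC*(Ap n*V1^2+Bp n*V1+Cp n) < CC*(Ap n*V2^2+Bp n*V2+Cp n) := by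
    rw [hSdef] at chain1; linarith [chain1, low1]
  have r2 : CC*(Ap n*V2^2+Bp n*V2+Cp n) < CC*(Ap n*V1^2+Bp n*V1+Cp n) := by
    rw [hSdef] at chain2; linarith [chain2, low2]
  linarith
end

section
/- Let G be a countable set, A a bounded self-adjoint operator on ℓ²(G), x ≠ y two distinct points of G, and z ∈ ℂ with Im z ≠ 0. Then there exist unique complex numbers α, β, τ₁, τ₂ (depending only on A, x, y, z and not on u, v) such that for all u, v ∈ ℝ, writing H_{u,v} = A + u P_x + v P_y with P_x, P_y the orthogonal projections onto ℂδ_x, ℂδ_y, the 2×2 matrix M(u,v) = [[u − α, −τ₁], [−τ₂, v − β]] is invertible and its inverse equals the matrix of Green function entries [[⟨δ_x,(H_{u,v}−z)⁻¹δ_x⟩, ⟨δ_x,(H_{u,v}−z)⁻¹δ_y⟩], [⟨δ_y,(H_{u,v}−z)⁻¹δ_x⟩, ⟨δ_y,(H_{u,v}−z)⁻¹δ_y⟩]]. -/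
set_option maxHeartbeats 1000000

open scoped ComplexConjugate

/-- Rank-two Schur complement formula: for a bounded self-adjoint operator
`A` on `ℓ²(G)`, distinct sites `x ≠ y` and `z` with `Im z ≠ 0`, there exist unique
`(α, β, τ₁, τ₂) ∈ ℂ⁴` such that for all real couplings `u, v`, the matrix
`[[u-α, -τ₁],[-τ₂, v-β]]` is invertible with inverse the 2×2 matrix of Green function entries
of `H_{u,v} = A + u P_x + v P_y` at the sites `x, y`. -/
theorem stmt4 {G : Type*} [Countable G] [DecidableEq G]
    (A : lp (fun _ : G => ℂ) 2 →L[ℂ] lp (fun _ : G => ℂ) 2) (hA : IsSelfAdjoint A)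
    (x y : G) (hxy : x ≠ y) (z : ℂ) (hz : z.im ≠ 0)
    (Px Py : lp (fun _ : G => ℂ) 2 →L[ℂ] lp (fun _ : G => ℂ) 2)
    (hPx : ∀ ψ, Px ψ = (inner ℂ (lp.single 2 x (1:ℂ)) ψ : ℂ) • lp.single 2 x (1:ℂ))
    (hPy : ∀ ψ, Py ψ = (inner ℂ (lp.single 2 y (1:ℂ)) ψ : ℂ) • lp.single 2 y (1:ℂ))
    (Gf : ℝ → ℝ → G → G → ℂ)
    (hGf : ∀ (u v : ℝ) (w w' : G), Gf u v w w' =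
      (inner ℂ (lp.single 2 w (1:ℂ))
        (Ring.inverse (A + (u : ℂ) • Px + (v : ℂ) • Py - z • 1) (lp.single 2 w' (1:ℂ))) : ℂ)) :
    ∃! p : ℂ × ℂ × ℂ × ℂ, ∀ u v : ℝ,
      !![(u : ℂ) - p.1, -p.2.2.1; -p.2.2.2, (v : ℂ) - p.2.1] *
          !![Gf u v x x, Gf u v x y; Gf u v y x, Gf u v y y] = 1 ∧
      !![Gf u v x x, Gf u v x y; Gf u v y x, Gf u v y y] *
          !![(u : ℂ) - p.1, -p.2.2.1; -p.2.2.2, (v : ℂ) - p.2.1] = 1 := by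
  classical
  -- notation
  set δ : G → lp (fun _ : G => ℂ) 2 := fun w => lp.single 2 w (1:ℂ) with hδ
  have hdel : ∀ w w' : G, (inner ℂ (δ w) (δ w') : ℂ) = if w = w' then 1 else 0 := by
    intro w w'
    rw [hδ]
    rw [lp.inner_single_left]
    simp [lp.single_apply, RCLike.inner_apply, Pi.single_apply]
  -- self-adjointness of the Hamiltonians
  have hPxsa : IsSelfAdjoint Px := by
    rw [IsSelfAdjoint, ContinuousLinearMap.star_eq_adjoint]
    symm
    rw [ContinuousLinearMap.eq_adjoint_iff]
    intro u v
    simp only [hPx, inner_smul_left, inner_smul_right, inner_conj_symm]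
    ring
  have hPysa : IsSelfAdjoint Py := by
    rw [IsSelfAdjoint, ContinuousLinearMap.star_eq_adjoint]
    symm
    rw [ContinuousLinearMap.eq_adjoint_iff]
    intro u v
    simp only [hPy, inner_smul_left, inner_smul_right, inner_conj_symm]
    ring
  have hHsa : ∀ u v : ℝ, IsSelfAdjoint (A + (u:ℂ) • Px + (v:ℂ) • Py) := by
    intro u v
    have h1 : IsSelfAdjoint ((u:ℂ) • Px) :=
      IsSelfAdjoint.smul (r := (u:ℂ)) (Complex.conj_ofReal u) hPxsa
    have h2 : IsSelfAdjoint ((v:ℂ) • Py) :=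
      IsSelfAdjoint.smul (r := (v:ℂ)) (Complex.conj_ofReal v) hPysa
    exact (hA.add h1).add h2
  have hUnit : ∀ u v : ℝ, IsUnit (A + (u:ℂ) • Px + (v:ℂ) • Py - z • 1) := by
    intro u v
    by_contra h
    have hmem : z ∈ spectrum ℂ (A + (u:ℂ) • Px + (v:ℂ) • Py) := by
      rw [spectrum.mem_iff]
      intro hu
      apply h
      rw [Algebra.algebraMap_eq_smul_one] at hu
      simpa [neg_sub] using hu.neg
    exact hz ((hHsa u v).im_eq_zero_of_mem_spectrum hmem)
  set R : ℝ → ℝ → (lp (fun _ : G => ℂ) 2 →L[ℂ] lp (fun _ : G => ℂ) 2) :=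
    fun u v => Ring.inverse (A + (u:ℂ) • Px + (v:ℂ) • Py - z • 1) with hRdef
  have hRmul : ∀ u v : ℝ, (A + (u:ℂ) • Px + (v:ℂ) • Py - z • 1) * R u v = 1 := fun u v =>
    Ring.mul_inverse_cancel _ (hUnit u v)
  have hmulR : ∀ u v : ℝ, R u v * (A + (u:ℂ) • Px + (v:ℂ) • Py - z • 1) = 1 := fun u v =>
    Ring.inverse_mul_cancel _ (hUnit u v)
  have hsplit : ∀ u v : ℝ, (A + (u:ℂ) • Px + (v:ℂ) • Py - z • 1)
      = (A + ((0:ℝ):ℂ) • Px + ((0:ℝ):ℂ) • Py - z • 1) + ((u:ℂ) • Px + (v:ℂ) • Py) := by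
    intro u v
    push_cast
    simp only [zero_smul, add_zero]
    abel
  -- resolvent identities
  have hres : ∀ u v : ℝ, R 0 0 = R u v + R 0 0 * ((u:ℂ) • Px + (v:ℂ) • Py) * R u v := by
    intro u v
    calc R 0 0 = R 0 0 * ((A + (u:ℂ) • Px + (v:ℂ) • Py - z • 1) * R u v) := by
          rw [hRmul u v, mul_one]
      _ = (R 0 0 * (A + ((0:ℝ):ℂ) • Px + ((0:ℝ):ℂ) • Py - z • 1)) * R u v
            + R 0 0 * ((u:ℂ) • Px + (v:ℂ) • Py) * R u v := by
          rw [hsplit u v]; noncomm_ring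
      _ = R u v + R 0 0 * ((u:ℂ) • Px + (v:ℂ) • Py) * R u v := by
          rw [hmulR 0 0, one_mul]
  have hres' : ∀ u v : ℝ, R 0 0 = R u v + R u v * ((u:ℂ) • Px + (v:ℂ) • Py) * R 0 0 := by
    intro u v
    calc R 0 0 = (R u v * (A + (u:ℂ) • Px + (v:ℂ) • Py - z • 1)) * R 0 0 := by
          rw [hmulR u v, one_mul]
      _ = R u v * ((A + ((0:ℝ):ℂ) • Px + ((0:ℝ):ℂ) • Py - z • 1) * R 0 0)
            + R u v * ((u:ℂ) • Px + (v:ℂ) • Py) * R 0 0 := by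
          rw [hsplit u v]; noncomm_ring
      _ = R u v + R u v * ((u:ℂ) • Px + (v:ℂ) • Py) * R 0 0 := by
          rw [hRmul 0 0, mul_one]
  -- Green function form
  have hG : ∀ (u v : ℝ) (w w' : G), Gf u v w w' = (inner ℂ (δ w) (R u v (δ w')) : ℂ) := by
    intro u v w w'
    rw [hGf, hδ, hRdef]
  -- scalar key identities
  have hkeyL : ∀ (u v : ℝ) (a b : G), Gf 0 0 a b
      = Gf u v a b + (u:ℂ) * Gf u v x b * Gf 0 0 a x + (v:ℂ) * Gf u v y b * Gf 0 0 a y := by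
    intro u v a b
    have h := congrArg (fun T : lp (fun _ : G => ℂ) 2 →L[ℂ] lp (fun _ : G => ℂ) 2 =>
      (inner ℂ (δ a) (T (δ b)) : ℂ)) (hres u v)
    simp only [ContinuousLinearMap.add_apply, ContinuousLinearMap.mul_apply,
      ContinuousLinearMap.smul_apply, hPx, hPy, map_add, map_smul, inner_add_right,
      inner_smul_right] at h
    rw [hG u v a b, hG 0 0 a b, hG u v x b, hG u v y b, hG 0 0 a x, hG 0 0 a y]
    rw [h]; ring
  have hkeyR : ∀ (u v : ℝ) (a b : G), Gf 0 0 a b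
      = Gf u v a b + (u:ℂ) * Gf 0 0 x b * Gf u v a x + (v:ℂ) * Gf 0 0 y b * Gf u v a y := by
    intro u v a b
    have h := congrArg (fun T : lp (fun _ : G => ℂ) 2 →L[ℂ] lp (fun _ : G => ℂ) 2 =>
      (inner ℂ (δ a) (T (δ b)) : ℂ)) (hres' u v)
    simp only [ContinuousLinearMap.add_apply, ContinuousLinearMap.mul_apply,
      ContinuousLinearMap.smul_apply, hPx, hPy, map_add, map_smul, inner_add_right,
      inner_smul_right] at h
    rw [hG u v a b, hG 0 0 a b, hG 0 0 x b, hG 0 0 y b, hG u v a x, hG u v a y]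
    rw [h]; ring
  -- invertibility of the unperturbed Green matrix
  have hNdet : (!![Gf 0 0 x x, Gf 0 0 x y; Gf 0 0 y x, Gf 0 0 y y]).det ≠ 0 := by
    intro hdet
    obtain ⟨ξ, hξ, hmv⟩ := (Matrix.exists_mulVec_eq_zero_iff).2 hdet
    set ψ : lp (fun _ : G => ℂ) 2 := ξ 0 • δ x + ξ 1 • δ y with hψ
    set φ : lp (fun _ : G => ℂ) 2 := R 0 0 ψ with hφ
    have hx0 : (inner ℂ (δ x) φ : ℂ) = 0 := by
      have h0 := congrFun hmv 0
      simp [Matrix.mulVec, dotProduct, Fin.sum_univ_two] at h0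
      rw [hφ, hψ]
      simp only [map_add, map_smul, inner_add_right, inner_smul_right]
      rw [← hG 0 0 x x, ← hG 0 0 x y]
      linear_combination h0
    have hy0 : (inner ℂ (δ y) φ : ℂ) = 0 := by
      have h0 := congrFun hmv 1
      simp [Matrix.mulVec, dotProduct, Fin.sum_univ_two] at h0
      rw [hφ, hψ]
      simp only [map_add, map_smul, inner_add_right, inner_smul_right]
      rw [← hG 0 0 y x, ← hG 0 0 y y]
      linear_combination h0
    have hinner0 : (inner ℂ ψ φ : ℂ) = 0 := by
      rw [hψ]
      simp only [inner_add_left, inner_smul_left]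
      rw [hx0, hy0]
      ring
    have hψeq : (A + ((0:ℝ):ℂ) • Px + ((0:ℝ):ℂ) • Py - z • 1) φ = ψ := by
      have h1 := congrArg (fun T : lp (fun _ : G => ℂ) 2 →L[ℂ] lp (fun _ : G => ℂ) 2 => T ψ)
        (hRmul 0 0)
      simpa [ContinuousLinearMap.mul_apply] using h1
    have hφ0 : φ = 0 := by
      have h2 : (inner ℂ ψ φ : ℂ)
          = (inner ℂ ((A + ((0:ℝ):ℂ) • Px + ((0:ℝ):ℂ) • Py) φ) φ : ℂ)
            - conj z * (inner ℂ φ φ : ℂ) := by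
        conv_lhs => rw [← hψeq]
        simp [ContinuousLinearMap.sub_apply, ContinuousLinearMap.smul_apply,
          ContinuousLinearMap.one_apply, inner_sub_left, inner_smul_left]
        ring
      have hsym := (ContinuousLinearMap.isSelfAdjoint_iff_isSymmetric).1 (hHsa 0 0)
      have hre : ((inner ℂ ((A + ((0:ℝ):ℂ) • Px + ((0:ℝ):ℂ) • Py) φ) φ : ℂ)).im = 0 := by
        exact Complex.conj_eq_iff_im.mp (hsym.conj_inner_sym φ φ)
      have hip : (inner ℂ φ φ : ℂ) = ((‖φ‖^2 : ℝ) : ℂ) := by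
        rw [inner_self_eq_norm_sq_to_K]; norm_cast
      rw [hinner0, hip] at h2
      have h4 := congrArg Complex.im h2
      simp only [Complex.zero_im, Complex.sub_im, hre, Complex.mul_im, Complex.conj_re,
        Complex.conj_im, Complex.ofReal_re, Complex.ofReal_im] at h4
      have hnφ : ‖φ‖ = 0 := by
        have : z.im * ‖φ‖ ^ 2 = 0 := by linarith [h4]
        rcases mul_eq_zero.1 this with h | h
        · exact absurd h hz
        · exact pow_eq_zero_iff (n := 2) (by norm_num) |>.1 h
      exact norm_eq_zero.1 hnφ
    have hψ0 : ψ = 0 := by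
      rw [← hψeq, hφ0, map_zero]
    have hξx : ξ 0 = 0 := by
      have hix : (inner ℂ (δ x) ψ : ℂ) = ξ 0 := by
        rw [hψ]
        simp [inner_add_right, inner_smul_right, hdel, hxy, hδ, lp.norm_single, lp.inner_single_left, lp.single_apply, Pi.single_apply]
      rw [hψ0] at hix
      simpa using hix.symm
    have hξy : ξ 1 = 0 := by
      have hiy : (inner ℂ (δ y) ψ : ℂ) = ξ 1 := by
        rw [hψ]
        simp [inner_add_right, inner_smul_right, hdel, hxy.symm, hδ, lp.norm_single, lp.inner_single_left, lp.single_apply, Pi.single_apply]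
      rw [hψ0] at hiy
      simpa using hiy.symm
    apply hξ
    funext i
    fin_cases i
    · exact hξx
    · exact hξy
  have hNunit : IsUnit (!![Gf 0 0 x x, Gf 0 0 x y; Gf 0 0 y x, Gf 0 0 y y]).det :=
    isUnit_iff_ne_zero.mpr hNdet
  set C : Matrix (Fin 2) (Fin 2) ℂ :=
    (!![Gf 0 0 x x, Gf 0 0 x y; Gf 0 0 y x, Gf 0 0 y y])⁻¹ with hCdef
  have hCl : C * !![Gf 0 0 x x, Gf 0 0 x y; Gf 0 0 y x, Gf 0 0 y y] = 1 :=
    Matrix.nonsing_inv_mul _ hNunit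
  have hCr : !![Gf 0 0 x x, Gf 0 0 x y; Gf 0 0 y x, Gf 0 0 y y] * C = 1 :=
    Matrix.mul_nonsing_inv _ hNunit
  have hMk1 : ∀ u v : ℝ,
      !![Gf u v x x, Gf u v x y; Gf u v y x, Gf u v y y]
        + !![Gf 0 0 x x, Gf 0 0 x y; Gf 0 0 y x, Gf 0 0 y y]
          * !![(u:ℂ), 0; 0, (v:ℂ)]
          * !![Gf u v x x, Gf u v x y; Gf u v y x, Gf u v y y]
      = !![Gf 0 0 x x, Gf 0 0 x y; Gf 0 0 y x, Gf 0 0 y y] := by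
    intro u v
    ext i j
    fin_cases i <;> fin_cases j
    all_goals simp [Matrix.add_apply, Matrix.mul_apply, Fin.sum_univ_two]
    · linear_combination -hkeyL u v x x
    · linear_combination -hkeyL u v x y
    · linear_combination -hkeyL u v y x
    · linear_combination -hkeyL u v y y
  have hMk2 : ∀ u v : ℝ,
      !![Gf u v x x, Gf u v x y; Gf u v y x, Gf u v y y]
        + !![Gf u v x x, Gf u v x y; Gf u v y x, Gf u v y y]
          * !![(u:ℂ), 0; 0, (v:ℂ)]
          * !![Gf 0 0 x x, Gf 0 0 x y; Gf 0 0 y x, Gf 0 0 y y]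
      = !![Gf 0 0 x x, Gf 0 0 x y; Gf 0 0 y x, Gf 0 0 y y] := by
    intro u v
    ext i j
    fin_cases i <;> fin_cases j
    all_goals simp [Matrix.add_apply, Matrix.mul_apply, Fin.sum_univ_two]
    · linear_combination -hkeyR u v x x
    · linear_combination -hkeyR u v x y
    · linear_combination -hkeyR u v y x
    · linear_combination -hkeyR u v y y
  have hp : ∀ u v : ℝ,
      !![(u:ℂ) - -(C 0 0), -(-(C 0 1)); -(-(C 1 0)), (v:ℂ) - -(C 1 1)] *
          !![Gf u v x x, Gf u v x y; Gf u v y x, Gf u v y y] = 1 ∧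
      !![Gf u v x x, Gf u v x y; Gf u v y x, Gf u v y y] *
          !![(u:ℂ) - -(C 0 0), -(-(C 0 1)); -(-(C 1 0)), (v:ℂ) - -(C 1 1)] = 1 := by
    intro u v
    have hM : !![(u:ℂ) - -(C 0 0), -(-(C 0 1)); -(-(C 1 0)), (v:ℂ) - -(C 1 1)]
        = !![(u:ℂ), 0; 0, (v:ℂ)] + C := by
      ext i j
      fin_cases i <;> fin_cases j <;>
        simp [Matrix.add_apply, sub_neg_eq_add, neg_neg]
    constructor
    · have h := congrArg (fun M => C * M) (hMk1 u v)
      simp only [mul_add, ← Matrix.mul_assoc] at h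
      rw [hCl] at h
      simp only [Matrix.one_mul] at h
      rw [hM, Matrix.add_mul, add_comm]
      exact h
    · have h := congrArg (fun M => M * C) (hMk2 u v)
      simp only [add_mul, Matrix.mul_assoc] at h
      rw [hCr] at h
      simp only [Matrix.mul_one] at h
      rw [hM, Matrix.mul_add, add_comm]
      exact h
  refine ⟨(-(C 0 0), -(C 1 1), -(C 0 1), -(C 1 0)), hp, ?_⟩
  rintro ⟨q1, q2, q3, q4⟩ hq
  have h1 := (hq 0 0).1
  have h2 := (hp 0 0).2
  have hqp : !![((0:ℝ):ℂ) - q1, -q3; -q4, ((0:ℝ):ℂ) - q2]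
      = !![((0:ℝ):ℂ) - -(C 0 0), -(-(C 0 1)); -(-(C 1 0)), ((0:ℝ):ℂ) - -(C 1 1)] := by
    calc !![((0:ℝ):ℂ) - q1, -q3; -q4, ((0:ℝ):ℂ) - q2]
        = !![((0:ℝ):ℂ) - q1, -q3; -q4, ((0:ℝ):ℂ) - q2] * 1 := (Matrix.mul_one _).symm
      _ = !![((0:ℝ):ℂ) - q1, -q3; -q4, ((0:ℝ):ℂ) - q2] *
            (!![Gf 0 0 x x, Gf 0 0 x y; Gf 0 0 y x, Gf 0 0 y y] *
              !![((0:ℝ):ℂ) - -(C 0 0), -(-(C 0 1)); -(-(C 1 0)), ((0:ℝ):ℂ) - -(C 1 1)]) := by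
          rw [h2]
      _ = (!![((0:ℝ):ℂ) - q1, -q3; -q4, ((0:ℝ):ℂ) - q2] *
            !![Gf 0 0 x x, Gf 0 0 x y; Gf 0 0 y x, Gf 0 0 y y]) *
            !![((0:ℝ):ℂ) - -(C 0 0), -(-(C 0 1)); -(-(C 1 0)), ((0:ℝ):ℂ) - -(C 1 1)] := by
          rw [Matrix.mul_assoc]
      _ = !![((0:ℝ):ℂ) - -(C 0 0), -(-(C 0 1)); -(-(C 1 0)), ((0:ℝ):ℂ) - -(C 1 1)] := by
          rw [h1, Matrix.one_mul]
  have e00 := congrArg (fun M : Matrix (Fin 2) (Fin 2) ℂ => M 0 0) hqp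
  have e01 := congrArg (fun M : Matrix (Fin 2) (Fin 2) ℂ => M 0 1) hqp
  have e10 := congrArg (fun M : Matrix (Fin 2) (Fin 2) ℂ => M 1 0) hqp
  have e11 := congrArg (fun M : Matrix (Fin 2) (Fin 2) ℂ => M 1 1) hqp
  simp at e00 e01 e10 e11
  simp only [Prod.mk.injEq]
  refine ⟨?_, ?_, ?_, ?_⟩
  · linear_combination -e00
  · linear_combination -e11
  · linear_combination -e01
  · linear_combination -e10
end

section
/- Let α, β, τ₁, τ₂ ∈ ℂ, u, v ∈ ℝ, and t > 0. Assume: (i) u − α ≠ 0; (ii) |τ₁| ≥ t; (iii) |τ₂| ≤ |u − α|; (iv) |v − (β + τ₁τ₂/(u − α))| ≤ t; and (v) the matrix M = [[u − α, −τ₁], [−τ₂, v − β]] is invertible. Then the entries of M⁻¹ satisfy |(M⁻¹)₁₂| ≥ (1/2)|(M⁻¹)₁₁|. -/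
/-- Deterministic core of the resonant delocalization bound: under a strong
tunneling amplitude, a resonance at `x` and non-resonance at `0`, the off-diagonal entry of
the inverse 2×2 matrix dominates half the diagonal entry. -/
theorem stmt6 (α β τ₁ τ₂ : ℂ) (u v t : ℝ) (ht : 0 < t)
    (h1 : (u : ℂ) - α ≠ 0)
    (h2 : t ≤ ‖τ₁‖)
    (h3 : ‖τ₂‖ ≤ ‖(u : ℂ) - α‖)
    (h4 : ‖(v : ℂ) - (β + τ₁ * τ₂ / ((u : ℂ) - α))‖ ≤ t)
    (h5 : IsUnit (!![(u : ℂ) - α, -τ₁; -τ₂, (v : ℂ) - β])) :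
    (1 / 2) * ‖(!![(u : ℂ) - α, -τ₁; -τ₂, (v : ℂ) - β])⁻¹ 0 0‖ ≤
      ‖(!![(u : ℂ) - α, -τ₁; -τ₂, (v : ℂ) - β])⁻¹ 0 1‖ := by
  have hkey : ‖((v : ℂ) - β)‖ ≤ 2 * ‖τ₁‖ := by
    have hq : ‖(τ₁ * τ₂ / ((u : ℂ) - α))‖ ≤ ‖τ₁‖ := by
      rw [norm_div, norm_mul]
      rw [div_le_iff₀ (norm_pos_iff.mpr h1)]
      exact mul_le_mul_of_nonneg_left h3 (norm_nonneg _)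
    calc ‖((v : ℂ) - β)‖
        ≤ ‖((v : ℂ) - (β + τ₁ * τ₂ / ((u : ℂ) - α)))‖
            + ‖(τ₁ * τ₂ / ((u : ℂ) - α))‖ := by
          have : (v : ℂ) - β = ((v : ℂ) - (β + τ₁ * τ₂ / ((u : ℂ) - α)))
              + τ₁ * τ₂ / ((u : ℂ) - α) := by ring
          rw [this]; exact norm_add_le _ _
      _ ≤ t + ‖τ₁‖ := add_le_add h4 hq
      _ ≤ ‖τ₁‖ + ‖τ₁‖ := add_le_add h2 le_rfl
      _ = 2 * ‖τ₁‖ := by ring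
  rw [Matrix.inv_def, Matrix.adjugate_fin_two_of]
  simp only [Matrix.smul_apply, Matrix.of_apply, Matrix.cons_val', Matrix.cons_val_zero,
    Matrix.cons_val_one, Matrix.head_cons, Matrix.empty_val', Matrix.cons_val_fin_one,
    Matrix.head_fin_const, smul_eq_mul, norm_mul, neg_neg]
  set r := ‖(Ring.inverse (!![(u : ℂ) - α, -τ₁; -τ₂, (v : ℂ) - β]).det)‖
  have hr : 0 ≤ r := norm_nonneg _
  calc 1 / 2 * (r * ‖((v : ℂ) - β)‖)
      ≤ 1 / 2 * (r * (2 * ‖τ₁‖)) := by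
        apply mul_le_mul_of_nonneg_left (mul_le_mul_of_nonneg_left hkey hr) (by norm_num)
    _ = r * ‖τ₁‖ := by ring
end

section
/- Let (Ω, ℬ, ℙ) be a probability space, (Ξ_n)_{n∈ℕ} a sequence of random variables with values in the open upper half-plane {z ∈ ℂ : Im z > 0} whose laws converge weakly (in distribution) to the law of a real-valued random variable X, and let V be a real-valued random variable independent of X and independent of each Ξ_n, whose distribution is absolutely continuous with density ρ ∈ L¹(ℝ). Assume there are δ > 0 and c < ∞ such that ρ(v) ≤ c · (1_ε * ρ)(v) for Lebesgue-almost every v ∈ ℝ and every ε ∈ (0, δ), where (1_ε * ρ)(v) := (1/(2ε)) ∫_{v−ε}^{v+ε} ρ(w) dw. Then for every ε ∈ (0, δ): limsup_{n→∞} 𝔼[ π⁻¹ Im( (V − Ξ_n)⁻¹ ) ] ≤ c · (1/(2ε)) · ℙ(|V − X| ≤ ε). -/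
open MeasureTheory ProbabilityTheory Filter Topology
open scoped ENNReal

noncomputable def kk (ε w : ℝ) (z : ℂ) : ℝ :=
  if z.im = 0 then (if z.re - ε < w ∧ w < z.re + ε then 1 else 0)
  else Real.pi⁻¹ * (Real.arctan ((w + ε - z.re) / |z.im|)
    - Real.arctan ((w - ε - z.re) / |z.im|))

lemma inv_im_eq (v : ℝ) (z : ℂ) :
    (((v : ℂ) - z)⁻¹).im = z.im / ((v - z.re) ^ 2 + z.im ^ 2) := by
  rw [Complex.inv_im]
  have h1 : ((v : ℂ) - z).im = -z.im := by simp
  have h2 : Complex.normSq ((v : ℂ) - z) = (v - z.re) ^ 2 + z.im ^ 2 := by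
    simp [Complex.normSq_apply]; ring
  rw [h1, h2, neg_neg]

lemma poisson_int (E η a b : ℝ) (hη : 0 < η) :
    ∫ x in a..b, η / ((x - E) ^ 2 + η ^ 2)
      = Real.arctan ((b - E) / η) - Real.arctan ((a - E) / η) := by
  have key : ∀ x : ℝ, η / ((x - E) ^ 2 + η ^ 2) = η⁻¹ * (1 + ((x - E) / η) ^ 2)⁻¹ := by
    intro x
    rw [div_pow, eq_comm]
    have hden : (x - E) ^ 2 + η ^ 2 ≠ 0 := by positivity
    field_simp
    ring
  simp_rw [key]
  rw [intervalIntegral.integral_comp_sub_right (fun x => η⁻¹ * (1 + (x / η) ^ 2)⁻¹) E]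
  rw [intervalIntegral.integral_comp_div (fun x => η⁻¹ * (1 + x ^ 2)⁻¹) hη.ne']
  rw [intervalIntegral.integral_const_mul, integral_inv_one_add_sq, smul_eq_mul]
  field_simp

lemma poisson_eq_kk (ε w : ℝ) (z : ℂ) (hz : 0 < z.im) :
    ∫ v in (w - ε)..(w + ε), Real.pi⁻¹ * (((v : ℂ) - z)⁻¹).im = kk ε w z := by
  simp_rw [inv_im_eq]
  rw [intervalIntegral.integral_const_mul, poisson_int z.re z.im _ _ hz]
  rw [kk, if_neg hz.ne', abs_of_pos hz]

lemma kk_nonneg (ε w : ℝ) (hε : 0 ≤ ε) (z : ℂ) : 0 ≤ kk ε w z := by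
  rw [kk]
  split_ifs with h1 h2
  · exact zero_le_one
  · exact le_refl 0
  · have him : 0 < |z.im| := abs_pos.2 h1
    have harc : Real.arctan ((w - ε - z.re) / |z.im|) ≤ Real.arctan ((w + ε - z.re) / |z.im|) := by
      apply Real.arctan_strictMono.monotone
      gcongr
      linarith
    have hπ : (0:ℝ) ≤ Real.pi⁻¹ := by positivity
    nlinarith [harc]

lemma kk_le_one (ε w : ℝ) (z : ℂ) : kk ε w z ≤ 1 := by
  rw [kk]
  split_ifs with h1 h2
  · exact le_refl 1
  · exact zero_le_one
  · have h1 := Real.arctan_lt_pi_div_two ((w + ε - z.re) / |z.im|)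
    have h2 := Real.neg_pi_div_two_lt_arctan ((w - ε - z.re) / |z.im|)
    have hπ := Real.pi_pos
    rw [inv_mul_le_iff₀ hπ, mul_one]
    linarith

lemma kk_measurable (ε : ℝ) (z : ℂ) : Measurable (fun w => kk ε w z) := by
  unfold kk
  by_cases h : z.im = 0
  · simp only [h, if_true, if_pos rfl]
    have hms : MeasurableSet {w : ℝ | z.re - ε < w ∧ w < z.re + ε} := by
      have : {w : ℝ | z.re - ε < w ∧ w < z.re + ε} = Set.Ioo (z.re - ε) (z.re + ε) := rfl
      rw [this]; exact measurableSet_Ioo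
    exact Measurable.ite hms measurable_const measurable_const
  · simp only [if_neg h]
    exact (measurable_const.mul ((Real.continuous_arctan.measurable.comp
      (by fun_prop)).sub (Real.continuous_arctan.measurable.comp (by fun_prop))))

lemma tendsto_abs_im_nhdsGT (z₀ : ℂ) (h : z₀.im = 0) :
    Tendsto (fun z : ℂ => |z.im|) (𝓝 z₀ ⊓ Filter.principal {z : ℂ | z.im = 0}ᶜ) (𝓝[>] 0) := by
  rw [tendsto_nhdsWithin_iff]
  constructor
  · have h1 : Tendsto (fun z : ℂ => |z.im|) (𝓝 z₀) (𝓝 |z₀.im|) :=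
      (continuous_abs.comp Complex.continuous_im).continuousAt
    rw [h, abs_zero] at h1
    exact h1.mono_left inf_le_left
  · rw [eventually_inf_principal]
    exact Eventually.of_forall fun z hz => abs_pos.2 hz

lemma tendsto_arctan_div_pos {c : ℝ} (hc : 0 < c) {l : Filter ℂ} {g : ℂ → ℝ}
    (hg : Tendsto g l (𝓝 c)) (him : Tendsto (fun z : ℂ => |z.im|) l (𝓝[>] 0)) :
    Tendsto (fun z => Real.arctan (g z / |z.im|)) l (𝓝 (Real.pi / 2)) := by
  have h1 : Tendsto (fun z => g z / |z.im|) l atTop := by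
    simp_rw [div_eq_mul_inv]
    exact hg.pos_mul_atTop hc (tendsto_inv_nhdsGT_zero.comp him)
  exact (Real.tendsto_arctan_atTop.comp h1).mono_right nhdsWithin_le_nhds

lemma tendsto_arctan_div_neg {c : ℝ} (hc : c < 0) {l : Filter ℂ} {g : ℂ → ℝ}
    (hg : Tendsto g l (𝓝 c)) (him : Tendsto (fun z : ℂ => |z.im|) l (𝓝[>] 0)) :
    Tendsto (fun z => Real.arctan (g z / |z.im|)) l (𝓝 (-(Real.pi / 2))) := by
  have h1 : Tendsto (fun z => g z / |z.im|) l atBot := by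
    simp_rw [div_eq_mul_inv]
    exact hg.neg_mul_atTop hc (tendsto_inv_nhdsGT_zero.comp him)
  exact (Real.tendsto_arctan_atBot.comp h1).mono_right nhdsWithin_le_nhds

lemma kk_continuousAt (ε : ℝ) (hε : 0 < ε) (w : ℝ) (z₀ : ℂ)
    (hw : z₀.im ≠ 0 ∨ (w ≠ z₀.re - ε ∧ w ≠ z₀.re + ε)) :
    ContinuousAt (fun z => kk ε w z) z₀ := by
  by_cases h0 : z₀.im = 0
  · obtain ⟨hw1, hw2⟩ := hw.resolve_left (not_not.2 h0)
    have hsplit : (𝓝 z₀) = (𝓝 z₀ ⊓ Filter.principal {z : ℂ | z.im = 0})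
        ⊔ (𝓝 z₀ ⊓ Filter.principal {z : ℂ | z.im = 0}ᶜ) := by
      rw [← inf_sup_left, Filter.sup_principal, Set.union_compl_self, Filter.principal_univ,
        inf_top_eq]
    unfold ContinuousAt
    rw [hsplit, tendsto_sup]
    have h1 : ∀ᶠ z : ℂ in 𝓝 z₀, (z.re - ε < w ↔ z₀.re - ε < w) := by
      rcases hw1.lt_or_gt with h | h
      · have hopen : IsOpen {z : ℂ | w < z.re - ε} :=
          isOpen_lt continuous_const (by fun_prop)
        filter_upwards [hopen.eventually_mem (by exact h)] with z hz
        constructor <;> intro <;> linarith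
      · have hopen : IsOpen {z : ℂ | z.re - ε < w} :=
          isOpen_lt (by fun_prop) continuous_const
        filter_upwards [hopen.eventually_mem (by exact h)] with z hz
        constructor <;> intro <;> [exact h; exact hz]
    have h2 : ∀ᶠ z : ℂ in 𝓝 z₀, (w < z.re + ε ↔ w < z₀.re + ε) := by
      rcases hw2.lt_or_gt with h | h
      · have hopen : IsOpen {z : ℂ | w < z.re + ε} :=
          isOpen_lt continuous_const (by fun_prop)
        filter_upwards [hopen.eventually_mem (by exact h)] with z hz
        constructor <;> intro <;> [exact h; exact hz]
      · have hopen : IsOpen {z : ℂ | z.re + ε < w} :=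
          isOpen_lt (by fun_prop) continuous_const
        filter_upwards [hopen.eventually_mem (by exact h)] with z hz
        constructor <;> intro <;> linarith
    constructor
    · have heq : ∀ᶠ z in 𝓝 z₀ ⊓ Filter.principal {z : ℂ | z.im = 0},
          kk ε w z₀ = kk ε w z := by
        have him : ∀ᶠ z in 𝓝 z₀ ⊓ Filter.principal {z : ℂ | z.im = 0}, z.im = 0 :=
          eventually_inf_principal.2 (Eventually.of_forall fun z hz => hz)
        filter_upwards [him, ((h1.and h2).filter_mono inf_le_left)] with z hz hiff
        rw [kk, kk, if_pos hz, if_pos h0]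
        rw [if_congr (and_congr hiff.1 hiff.2) rfl rfl]
      exact Tendsto.congr' heq tendsto_const_nhds
    · set l₂ := 𝓝 z₀ ⊓ Filter.principal {z : ℂ | z.im = 0}ᶜ with hl₂
      have him0 : Tendsto (fun z : ℂ => |z.im|) l₂ (𝓝[>] 0) := tendsto_abs_im_nhdsGT z₀ h0
      have hg1 : Tendsto (fun z : ℂ => w + ε - z.re) l₂ (𝓝 (w + ε - z₀.re)) :=
        (((continuous_const.sub Complex.continuous_re).tendsto z₀)).mono_left inf_le_left
      have hg2 : Tendsto (fun z : ℂ => w - ε - z.re) l₂ (𝓝 (w - ε - z₀.re)) :=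
        (((continuous_const.sub Complex.continuous_re).tendsto z₀)).mono_left inf_le_left
      have hforma : ∀ᶠ z in l₂,
          Real.pi⁻¹ * (Real.arctan ((w + ε - z.re) / |z.im|)
            - Real.arctan ((w - ε - z.re) / |z.im|)) = kk ε w z := by
        rw [hl₂, eventually_inf_principal]
        refine Eventually.of_forall fun z hz => ?_
        have hz' : ¬ z.im = 0 := hz
        rw [kk, if_neg hz']
      refine Tendsto.congr' hforma ?_
      have hkk : kk ε w z₀ = if z₀.re - ε < w ∧ w < z₀.re + ε then 1 else 0 := by
        rw [kk, if_pos h0]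
      beta_reduce
      rw [hkk]
      by_cases hin : z₀.re - ε < w ∧ w < z₀.re + ε
      · rw [if_pos hin]
        have hc1 : 0 < w + ε - z₀.re := by linarith [hin.1]
        have hc2 : w - ε - z₀.re < 0 := by linarith [hin.2]
        have hT := ((tendsto_arctan_div_pos hc1 hg1 him0).sub
          (tendsto_arctan_div_neg hc2 hg2 him0)).const_mul Real.pi⁻¹
        have hval : Real.pi⁻¹ * (Real.pi / 2 - -(Real.pi / 2)) = 1 := by
          field_simp
          norm_num
        rwa [hval] at hT
      · rw [if_neg hin]
        have hcase : w < z₀.re - ε ∨ z₀.re + ε < w := by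
          rcases hw1.lt_or_gt with h | h
          · exact Or.inl h
          · right
            rcases hw2.lt_or_gt with h' | h'
            · exact absurd ⟨h, h'⟩ hin
            · exact h'
        rcases hcase with h | h
        · have hc1 : w + ε - z₀.re < 0 := by linarith
          have hc2 : w - ε - z₀.re < 0 := by linarith [hε]
          have hT := ((tendsto_arctan_div_neg hc1 hg1 him0).sub
            (tendsto_arctan_div_neg hc2 hg2 him0)).const_mul Real.pi⁻¹
          simpa using hT
        · have hc1 : 0 < w + ε - z₀.re := by linarith [hε]
          have hc2 : 0 < w - ε - z₀.re := by linarith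
          have hT := ((tendsto_arctan_div_pos hc1 hg1 him0).sub
            (tendsto_arctan_div_pos hc2 hg2 him0)).const_mul Real.pi⁻¹
          simpa using hT
  · have hopen : IsOpen {z : ℂ | ¬ z.im = 0} :=
      isOpen_compl_iff.2 (isClosed_eq Complex.continuous_im continuous_const)
    have hev : ∀ᶠ z in 𝓝 z₀, (fun z : ℂ => Real.pi⁻¹ * (Real.arctan ((w + ε - z.re) / |z.im|)
        - Real.arctan ((w - ε - z.re) / |z.im|))) z = kk ε w z := by
      filter_upwards [hopen.eventually_mem h0] with z hz
      have hz' : ¬ z.im = 0 := hz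
      rw [kk, if_neg hz']
    have hne : |z₀.im| ≠ 0 := abs_ne_zero.2 h0
    have him : ContinuousAt (fun z : ℂ => |z.im|) z₀ :=
      (continuous_abs.comp Complex.continuous_im).continuousAt
    have hfc : ContinuousAt (fun z : ℂ => Real.pi⁻¹ * (Real.arctan ((w + ε - z.re) / |z.im|)
        - Real.arctan ((w - ε - z.re) / |z.im|))) z₀ := by
      apply ContinuousAt.mul continuousAt_const
      apply ContinuousAt.sub
      · exact Real.continuous_arctan.continuousAt.comp
          (((continuous_const.sub Complex.continuous_re).continuousAt).div him hne)
      · exact Real.continuous_arctan.continuousAt.comp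
          (((continuous_const.sub Complex.continuous_re).continuousAt).div him hne)
    exact hfc.congr hev

section gg
variable (ρ : ℝ → ℝ) (ε : ℝ)

noncomputable def gg (z : ℂ) : ℝ := ∫ w, ρ w * kk ε w z

variable {ρ ε}
variable (hρmeas : Measurable ρ) (hρ0 : ∀ v, 0 ≤ ρ v) (hρL1 : Integrable ρ) (hε : 0 < ε)

include hρmeas hρ0 hρL1 hε

lemma gg_int (z : ℂ) : Integrable (fun w => ρ w * kk ε w z) volume := by
  refine Integrable.mono hρL1 ((hρmeas.mul (kk_measurable ε z)).aestronglyMeasurable) ?_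
  refine Eventually.of_forall fun w => ?_
  rw [Real.norm_eq_abs, Real.norm_eq_abs, abs_mul,
    abs_of_nonneg (hρ0 w), abs_of_nonneg (kk_nonneg ε w hε.le z)]
  nth_rewrite 2 [← mul_one (ρ w)]
  exact mul_le_mul_of_nonneg_left (kk_le_one ε w z) (hρ0 w)

lemma gg_nonneg (z : ℂ) : 0 ≤ gg ρ ε z :=
  integral_nonneg fun w => mul_nonneg (hρ0 w) (kk_nonneg ε w hε.le z)

lemma gg_le (z : ℂ) : gg ρ ε z ≤ ∫ w, ρ w := by
  refine integral_mono (gg_int hρmeas hρ0 hρL1 hε z) hρL1 fun w => ?_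
  nth_rewrite 2 [← mul_one (ρ w)]
  exact mul_le_mul_of_nonneg_left (kk_le_one ε w z) (hρ0 w)

lemma gg_continuous : Continuous (gg ρ ε) := by
  rw [continuous_iff_continuousAt]
  intro z₀
  unfold ContinuousAt gg
  refine tendsto_integral_filter_of_dominated_convergence (fun w => ρ w) ?_ ?_ hρL1 ?_
  · exact Eventually.of_forall fun z =>
      ((hρmeas.mul (kk_measurable ε z)).aestronglyMeasurable)
  · refine Eventually.of_forall fun z => Eventually.of_forall fun w => ?_
    show |ρ w * kk ε w z| ≤ ρ w
    rw [abs_mul, abs_of_nonneg (hρ0 w), abs_of_nonneg (kk_nonneg ε w hε.le z)]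
    nth_rewrite 2 [← mul_one (ρ w)]
    exact mul_le_mul_of_nonneg_left (kk_le_one ε w z) (hρ0 w)
  · have hnull : ∀ᵐ w : ℝ ∂volume, w ≠ z₀.re - ε ∧ w ≠ z₀.re + ε := by
      have : volume ({z₀.re - ε, z₀.re + ε} : Set ℝ) = 0 :=
        (Set.Finite.measure_zero (Set.toFinite _) volume)
      rw [ae_iff]
      convert this using 2
      ext w
      simp only [Set.mem_setOf_eq, not_and_or, not_not, Set.mem_insert_iff,
        Set.mem_singleton_iff]
    filter_upwards [hnull] with w hw
    exact Tendsto.const_mul (ρ w) (kk_continuousAt ε hε w z₀ (Or.inr hw))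

end gg

section main
variable {ρ : ℝ → ℝ} {ε c : ℝ}
variable (hρmeas : Measurable ρ) (hρ0 : ∀ v, 0 ≤ ρ v) (hρL1 : Integrable ρ) (hε : 0 < ε)
  (hc : 0 ≤ c)
  (hconvε : ∀ᵐ v ∂(volume : Measure ℝ),
      ρ v ≤ c * ((1 / (2 * ε)) * ∫ w in (v - ε)..(v + ε), ρ w))

include hρmeas hρ0 hρL1 hε hc hconvε in
lemma inner_bound (z : ℂ) (hz : 0 < z.im) :
    ∫⁻ v, ENNReal.ofReal (ρ v)
        * ENNReal.ofReal (Real.pi⁻¹ * (((v : ℂ) - z)⁻¹).im) ∂(volume : Measure ℝ)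
      ≤ ENNReal.ofReal (c * (1 / (2 * ε))) * ENNReal.ofReal (gg ρ ε z) := by
  set P : ℝ → ℝ := fun v => Real.pi⁻¹ * (((v : ℂ) - z)⁻¹).im with hP
  have hzne : ∀ v : ℝ, ((v : ℂ) - z) ≠ 0 := by
    intro v h
    have h' := congrArg Complex.im h
    simp only [Complex.sub_im, Complex.ofReal_im, Complex.zero_im, zero_sub] at h'
    exact hz.ne' (by linarith)
  have hPcont : Continuous P :=
    continuous_const.mul (Complex.continuous_im.comp
      ((Complex.continuous_ofReal.sub continuous_const).inv₀ hzne))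
  have hP0 : ∀ v, 0 ≤ P v := by
    intro v
    refine mul_nonneg (by positivity) ?_
    rw [inv_im_eq]
    exact div_nonneg hz.le (by positivity)
  set C : ℝ≥0∞ := ENNReal.ofReal (c * (1 / (2 * ε))) with hC
  set J : ℝ → ℝ≥0∞ := fun v => ∫⁻ w in Set.Ioc (v - ε) (v + ε), ENNReal.ofReal (ρ w) with hJ
  have step1 : ∫⁻ v, ENNReal.ofReal (ρ v) * ENNReal.ofReal (P v)
      ≤ ∫⁻ v, (C * J v) * ENNReal.ofReal (P v) := by
    refine lintegral_mono_ae ?_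
    filter_upwards [hconvε] with v hv
    refine mul_le_mul_left ?_ _
    have h1 : ENNReal.ofReal (ρ v)
        ≤ ENNReal.ofReal (c * ((1 / (2 * ε)) * ∫ w in (v - ε)..(v + ε), ρ w)) :=
      ENNReal.ofReal_le_ofReal hv
    have h2 : c * ((1 / (2 * ε)) * ∫ w in (v - ε)..(v + ε), ρ w)
        = (c * (1 / (2 * ε))) * ∫ w in (v - ε)..(v + ε), ρ w := by ring
    have h3 : ENNReal.ofReal ((c * (1 / (2 * ε))) * ∫ w in (v - ε)..(v + ε), ρ w)
        = C * ENNReal.ofReal (∫ w in (v - ε)..(v + ε), ρ w) :=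
      ENNReal.ofReal_mul (mul_nonneg hc (by positivity))
    have h4 : ENNReal.ofReal (∫ w in (v - ε)..(v + ε), ρ w) = J v := by
      rw [intervalIntegral.integral_of_le (by linarith)]
      exact ofReal_integral_eq_lintegral_ofReal hρL1.integrableOn (ae_of_all _ hρ0)
    rw [h2, h3, h4] at h1
    exact h1
  have step2 : ∫⁻ v, (C * J v) * ENNReal.ofReal (P v)
      = C * ∫⁻ v, J v * ENNReal.ofReal (P v) := by
    simp_rw [mul_assoc]
    exact lintegral_const_mul' _ _ ENNReal.ofReal_ne_top
  have hJite : ∀ v, J v = ∫⁻ w, (if v - ε < w ∧ w ≤ v + ε then ENNReal.ofReal (ρ w) else 0) := by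
    intro v
    show (∫⁻ w in Set.Ioc (v - ε) (v + ε), ENNReal.ofReal (ρ w)) = _
    rw [← lintegral_indicator measurableSet_Ioc]
    congr 1
    ext w
    rw [Set.indicator_apply]
    simp [Set.mem_Ioc]
  have step3 : ∫⁻ v, J v * ENNReal.ofReal (P v)
      = ∫⁻ v, ∫⁻ w, (if v - ε < w ∧ w ≤ v + ε then ENNReal.ofReal (ρ w) else 0)
          * ENNReal.ofReal (P v) := by
    congr 1
    ext v
    rw [hJite v, ← lintegral_mul_const' (ENNReal.ofReal (P v)) _ ENNReal.ofReal_ne_top]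
  have hqmeas : Measurable (fun p : ℝ × ℝ =>
      (if p.1 - ε < p.2 ∧ p.2 ≤ p.1 + ε then ENNReal.ofReal (ρ p.2) else 0)
        * ENNReal.ofReal (P p.1)) := by
    have hS : MeasurableSet {p : ℝ × ℝ | p.1 - ε < p.2 ∧ p.2 ≤ p.1 + ε} :=
      ((measurableSet_lt (measurable_fst.sub measurable_const) measurable_snd).inter
        (measurableSet_le measurable_snd (measurable_fst.add measurable_const)))
    exact (Measurable.ite hS ((ENNReal.measurable_ofReal.comp hρmeas).comp measurable_snd)
      measurable_const).mul ((ENNReal.measurable_ofReal.comp hPcont.measurable).comp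
      measurable_fst)
  have step4 : ∫⁻ v, ∫⁻ w, (if v - ε < w ∧ w ≤ v + ε then ENNReal.ofReal (ρ w) else 0)
          * ENNReal.ofReal (P v) ∂volume ∂volume
      = ∫⁻ w, ∫⁻ v, (if v - ε < w ∧ w ≤ v + ε then ENNReal.ofReal (ρ w) else 0)
          * ENNReal.ofReal (P v) ∂volume ∂volume :=
    lintegral_lintegral_swap hqmeas.aemeasurable
  have step5 : ∀ w : ℝ, ∫⁻ v, (if v - ε < w ∧ w ≤ v + ε then ENNReal.ofReal (ρ w) else 0)
          * ENNReal.ofReal (P v) ∂volume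
      = ENNReal.ofReal (ρ w) * ∫⁻ v in Set.Ico (w - ε) (w + ε), ENNReal.ofReal (P v) := by
    intro w
    rw [← lintegral_indicator measurableSet_Ico, ← lintegral_const_mul' _ _ ENNReal.ofReal_ne_top]
    congr 1
    ext v
    rw [Set.indicator_apply]
    by_cases h : v - ε < w ∧ w ≤ v + ε
    · rw [if_pos h, if_pos (by simp only [Set.mem_Ico]; constructor <;> linarith [h.1, h.2])]
    · rw [if_neg h, if_neg ?_, mul_zero, zero_mul]
      simp only [Set.mem_Ico]
      intro hmem
      exact h ⟨by linarith [hmem.2], by linarith [hmem.1]⟩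
  have step6 : ∀ w : ℝ, ∫⁻ v in Set.Ico (w - ε) (w + ε), ENNReal.ofReal (P v)
      = ENNReal.ofReal (kk ε w z) := by
    intro w
    rw [Measure.restrict_congr_set Ico_ae_eq_Ioc]
    rw [← ofReal_integral_eq_lintegral_ofReal
      (hPcont.integrableOn_Ioc) (ae_of_all _ hP0)]
    congr 1
    rw [← intervalIntegral.integral_of_le (by linarith : w - ε ≤ w + ε)]
    exact poisson_eq_kk ε w z hz
  have step7 : ∫⁻ w, ENNReal.ofReal (ρ w) * ENNReal.ofReal (kk ε w z) ∂volume
      = ENNReal.ofReal (gg ρ ε z) := by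
    have : ∀ w, ENNReal.ofReal (ρ w) * ENNReal.ofReal (kk ε w z)
        = ENNReal.ofReal (ρ w * kk ε w z) := fun w => (ENNReal.ofReal_mul (hρ0 w)).symm
    simp_rw [this]
    rw [← ofReal_integral_eq_lintegral_ofReal (gg_int hρmeas hρ0 hρL1 hε z)
      (ae_of_all _ fun w => mul_nonneg (hρ0 w) (kk_nonneg ε w hε.le z))]
    rfl
  calc ∫⁻ v, ENNReal.ofReal (ρ v) * ENNReal.ofReal (P v) ∂volume
      ≤ ∫⁻ v, (C * J v) * ENNReal.ofReal (P v) ∂volume := step1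
    _ = C * ∫⁻ v, J v * ENNReal.ofReal (P v) ∂volume := step2
    _ = C * ∫⁻ w, ∫⁻ v, (if v - ε < w ∧ w ≤ v + ε then ENNReal.ofReal (ρ w) else 0)
          * ENNReal.ofReal (P v) ∂volume ∂volume := by rw [step3, step4]
    _ = C * ∫⁻ w, ENNReal.ofReal (ρ w) * ENNReal.ofReal (kk ε w z) ∂volume := by
        congr 1
        refine lintegral_congr fun w => ?_
        rw [step5 w, step6 w]
    _ = C * ENNReal.ofReal (gg ρ ε z) := by rw [step7]

end main

section main2
variable {Ω : Type*} [MeasurableSpace Ω] (μ : Measure Ω) [IsProbabilityMeasure μ]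
variable {ρ : ℝ → ℝ} {ε c : ℝ}
variable (hρmeas : Measurable ρ) (hρ0 : ∀ v, 0 ≤ ρ v) (hρL1 : Integrable ρ) (hε : 0 < ε)
  (hc : 0 ≤ c)
  (hconvε : ∀ᵐ v ∂(volume : Measure ℝ),
      ρ v ≤ c * ((1 / (2 * ε)) * ∫ w in (v - ε)..(v + ε), ρ w))
  (V : Ω → ℝ) (hVmeas : Measurable V)
  (hρdens : μ.map V = (volume : Measure ℝ).withDensity (fun v => ENNReal.ofReal (ρ v)))

include hρmeas hρ0 hρL1 hε hc hconvε hVmeas hρdens in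
lemma key_bound (Θ : Ω → ℂ) (hΘmeas : Measurable Θ) (hΘup : ∀ ω, 0 < (Θ ω).im)
    (hVΘ : IndepFun V Θ μ) :
    ∫ ω, (Real.pi)⁻¹ * (((V ω : ℂ) - Θ ω)⁻¹).im ∂μ
      ≤ (c * (1 / (2 * ε))) * ∫ ω, gg ρ ε (Θ ω) ∂μ := by
  haveI hPV : IsProbabilityMeasure (μ.map V) := Measure.isProbabilityMeasure_map hVmeas.aemeasurable
  haveI hPΘ : IsProbabilityMeasure (μ.map Θ) := Measure.isProbabilityMeasure_map hΘmeas.aemeasurable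
  have hf0 : ∀ ω, 0 ≤ (Real.pi)⁻¹ * (((V ω : ℂ) - Θ ω)⁻¹).im := by
    intro ω
    refine mul_nonneg (by positivity) ?_
    rw [inv_im_eq]
    exact div_nonneg (hΘup ω).le (by positivity)
  have hfmeas : Measurable fun ω => (Real.pi)⁻¹ * (((V ω : ℂ) - Θ ω)⁻¹).im :=
    measurable_const.mul (Complex.measurable_im.comp
      (((Complex.measurable_ofReal.comp hVmeas).sub hΘmeas).inv))
  have hFmeas : Measurable fun p : ℝ × ℂ =>
      ENNReal.ofReal ((Real.pi)⁻¹ * (((p.1 : ℂ) - p.2)⁻¹).im) :=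
    ENNReal.measurable_ofReal.comp (measurable_const.mul (Complex.measurable_im.comp
      (((Complex.measurable_ofReal.comp measurable_fst).sub measurable_snd).inv)))
  rw [integral_eq_lintegral_of_nonneg_ae (ae_of_all _ hf0) hfmeas.aestronglyMeasurable]
  set C : ℝ≥0∞ := ENNReal.ofReal (c * (1 / (2 * ε))) with hC
  have hmap : μ.map (fun ω => (V ω, Θ ω)) = (μ.map V).prod (μ.map Θ) :=
    (indepFun_iff_map_prod_eq_prod_map_map hVmeas.aemeasurable hΘmeas.aemeasurable).mp hVΘ
  have hggcont : Continuous (gg ρ ε) := gg_continuous hρmeas hρ0 hρL1 hε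
  have hkey : ∫⁻ ω, ENNReal.ofReal ((Real.pi)⁻¹ * (((V ω : ℂ) - Θ ω)⁻¹).im) ∂μ
      ≤ C * ∫⁻ ω, ENNReal.ofReal (gg ρ ε (Θ ω)) ∂μ := by
    have e1 : ∫⁻ ω, ENNReal.ofReal ((Real.pi)⁻¹ * (((V ω : ℂ) - Θ ω)⁻¹).im) ∂μ
        = ∫⁻ p, ENNReal.ofReal ((Real.pi)⁻¹ * (((p.1 : ℂ) - p.2)⁻¹).im)
            ∂((μ.map V).prod (μ.map Θ)) := by
      rw [← hmap, lintegral_map hFmeas (hVmeas.prodMk hΘmeas)]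
    have e2 : ∫⁻ p, ENNReal.ofReal ((Real.pi)⁻¹ * (((p.1 : ℂ) - p.2)⁻¹).im)
            ∂((μ.map V).prod (μ.map Θ))
        = ∫⁻ z, ∫⁻ v, ENNReal.ofReal ((Real.pi)⁻¹ * (((v : ℂ) - z)⁻¹).im)
            ∂(μ.map V) ∂(μ.map Θ) :=
      lintegral_prod_symm _ hFmeas.aemeasurable
    have him : ∀ᵐ z ∂(μ.map Θ), 0 < z.im := by
      rw [ae_map_iff hΘmeas.aemeasurable
        (measurableSet_lt measurable_const Complex.measurable_im)]
      exact ae_of_all _ hΘup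
    have e3 : ∫⁻ z, ∫⁻ v, ENNReal.ofReal ((Real.pi)⁻¹ * (((v : ℂ) - z)⁻¹).im)
            ∂(μ.map V) ∂(μ.map Θ)
        ≤ ∫⁻ z, C * ENNReal.ofReal (gg ρ ε z) ∂(μ.map Θ) := by
      refine lintegral_mono_ae ?_
      filter_upwards [him] with z hz
      have hinner : ∫⁻ v, ENNReal.ofReal ((Real.pi)⁻¹ * (((v : ℂ) - z)⁻¹).im) ∂(μ.map V)
          = ∫⁻ v, ENNReal.ofReal (ρ v)
              * ENNReal.ofReal ((Real.pi)⁻¹ * (((v : ℂ) - z)⁻¹).im) ∂(volume : Measure ℝ) := by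
        have hg : Measurable fun v : ℝ =>
            ENNReal.ofReal ((Real.pi)⁻¹ * (((v : ℂ) - z)⁻¹).im) := by
          exact ENNReal.measurable_ofReal.comp (measurable_const.mul (Complex.measurable_im.comp
            ((Complex.measurable_ofReal.sub measurable_const).inv)))
        rw [hρdens, lintegral_withDensity_eq_lintegral_mul _ hρmeas.ennreal_ofReal hg]
        rfl
      rw [hinner]
      exact inner_bound hρmeas hρ0 hρL1 hε hc hconvε z hz
    have e4 : ∫⁻ z, C * ENNReal.ofReal (gg ρ ε z) ∂(μ.map Θ)
        = C * ∫⁻ ω, ENNReal.ofReal (gg ρ ε (Θ ω)) ∂μ := by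
      have hg2 : Measurable fun z : ℂ => ENNReal.ofReal (gg ρ ε z) := by
        exact ENNReal.measurable_ofReal.comp hggcont.measurable
      rw [lintegral_const_mul' _ _ ENNReal.ofReal_ne_top, lintegral_map hg2 hΘmeas]
    rw [e1, e2, ← e4]
    exact e3
  have hgg_fin : ∫⁻ ω, ENNReal.ofReal (gg ρ ε (Θ ω)) ∂μ ≤ ENNReal.ofReal (∫ w, ρ w) := by
    calc ∫⁻ ω, ENNReal.ofReal (gg ρ ε (Θ ω)) ∂μ
        ≤ ∫⁻ _, ENNReal.ofReal (∫ w, ρ w) ∂μ :=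
          lintegral_mono fun ω =>
            ENNReal.ofReal_le_ofReal (gg_le hρmeas hρ0 hρL1 hε (Θ ω))
      _ = ENNReal.ofReal (∫ w, ρ w) := by simp
  have hne : C * ∫⁻ ω, ENNReal.ofReal (gg ρ ε (Θ ω)) ∂μ ≠ ⊤ :=
    ENNReal.mul_ne_top ENNReal.ofReal_ne_top
      (lt_of_le_of_lt hgg_fin ENNReal.ofReal_lt_top).ne
  have := ENNReal.toReal_mono hne hkey
  refine le_trans this ?_
  rw [ENNReal.toReal_mul, hC, ENNReal.toReal_ofReal (mul_nonneg hc (by positivity))]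
  refine mul_le_mul_of_nonneg_left ?_ (mul_nonneg hc (by positivity))
  rw [← integral_eq_lintegral_of_nonneg_ae
    (ae_of_all _ fun ω => gg_nonneg hρmeas hρ0 hρL1 hε (Θ ω))
    ((hggcont.measurable.comp hΘmeas).aestronglyMeasurable)]

end main2

section main3
variable {Ω : Type*} [MeasurableSpace Ω] (μ : Measure Ω) [IsProbabilityMeasure μ]
variable {ρ : ℝ → ℝ} {ε : ℝ}
variable (hρmeas : Measurable ρ) (hρ0 : ∀ v, 0 ≤ ρ v) (hρL1 : Integrable ρ) (hε : 0 < ε)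
  (V : Ω → ℝ) (hVmeas : Measurable V)
  (hρdens : μ.map V = (volume : Measure ℝ).withDensity (fun v => ENNReal.ofReal (ρ v)))

include hρmeas hρ0 hρL1 hε hVmeas hρdens in
lemma gg_X_bound (X : Ω → ℝ) (hXmeas : Measurable X) (hVX : IndepFun V X μ) :
    ∫ ω, gg ρ ε ((X ω : ℂ)) ∂μ ≤ (μ {ω | |V ω - X ω| ≤ ε}).toReal := by
  have hggcont : Continuous (gg ρ ε) := gg_continuous hρmeas hρ0 hρL1 hε
  have hg : Measurable fun x : ℝ => ENNReal.ofReal (gg ρ ε (x : ℂ)) := by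
    exact ENNReal.measurable_ofReal.comp
      ((hggcont.comp Complex.continuous_ofReal).measurable)
  have step1 : ∫ ω, gg ρ ε ((X ω : ℂ)) ∂μ
      = (∫⁻ ω, ENNReal.ofReal (gg ρ ε ((X ω : ℂ))) ∂μ).toReal := by
    rw [integral_eq_lintegral_of_nonneg_ae
      (ae_of_all _ fun ω => gg_nonneg hρmeas hρ0 hρL1 hε _)
      (((hggcont.comp Complex.continuous_ofReal).measurable.comp hXmeas).aestronglyMeasurable)]
  have step2 : ∫⁻ ω, ENNReal.ofReal (gg ρ ε ((X ω : ℂ))) ∂μ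
      = ∫⁻ x, ENNReal.ofReal (gg ρ ε ((x : ℂ))) ∂(μ.map X) := by
    rw [lintegral_map hg hXmeas]
  have step3 : ∀ x : ℝ, ENNReal.ofReal (gg ρ ε ((x : ℂ)))
      ≤ (μ.map V) (Set.Icc (x - ε) (x + ε)) := by
    intro x
    have hkkx : ∀ w, kk ε w (x : ℂ) = if x - ε < w ∧ w < x + ε then 1 else 0 := by
      intro w
      rw [kk, if_pos (Complex.ofReal_im x)]
      simp [Complex.ofReal_re]
    have h1 : ENNReal.ofReal (gg ρ ε ((x : ℂ)))
        = ∫⁻ w, ENNReal.ofReal (ρ w * kk ε w (x : ℂ)) ∂volume :=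
      ofReal_integral_eq_lintegral_ofReal (gg_int hρmeas hρ0 hρL1 hε _)
        (ae_of_all _ fun w => mul_nonneg (hρ0 w) (kk_nonneg ε w hε.le _))
    have h2 : ∀ w, ENNReal.ofReal (ρ w * kk ε w (x : ℂ))
        ≤ (Set.Icc (x - ε) (x + ε)).indicator (fun w => ENNReal.ofReal (ρ w)) w := by
      intro w
      rw [hkkx w]
      by_cases h : x - ε < w ∧ w < x + ε
      · rw [if_pos h, mul_one, Set.indicator_of_mem (by
          simp only [Set.mem_Icc]; exact ⟨by linarith [h.1], by linarith [h.2]⟩)]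
      · rw [if_neg h, mul_zero]
        simp
    rw [h1]
    calc ∫⁻ w, ENNReal.ofReal (ρ w * kk ε w (x : ℂ)) ∂volume
        ≤ ∫⁻ w, (Set.Icc (x - ε) (x + ε)).indicator
            (fun w => ENNReal.ofReal (ρ w)) w ∂volume := lintegral_mono h2
      _ = ∫⁻ w in Set.Icc (x - ε) (x + ε), ENNReal.ofReal (ρ w) ∂volume :=
          lintegral_indicator measurableSet_Icc _
      _ = (μ.map V) (Set.Icc (x - ε) (x + ε)) := by
          rw [hρdens, withDensity_apply _ measurableSet_Icc]
  have hs : MeasurableSet {p : ℝ × ℝ | |p.2 - p.1| ≤ ε} :=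
    (isClosed_le (continuous_abs.comp (continuous_snd.sub continuous_fst))
      continuous_const).measurableSet
  have step4 : ∫⁻ x, (μ.map V) (Set.Icc (x - ε) (x + ε)) ∂(μ.map X)
      = μ {ω | |V ω - X ω| ≤ ε} := by
    have hmeq : μ {ω | |V ω - X ω| ≤ ε}
        = ((μ.map X).prod (μ.map V)) {p : ℝ × ℝ | |p.2 - p.1| ≤ ε} := by
      rw [← (indepFun_iff_map_prod_eq_prod_map_map hXmeas.aemeasurable
        hVmeas.aemeasurable).mp hVX.symm,
        Measure.map_apply (hXmeas.prodMk hVmeas) hs]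
      rfl
    rw [hmeq, Measure.prod_apply hs]
    refine lintegral_congr fun x => ?_
    congr 1
    ext v
    simp only [Set.mem_preimage, Set.mem_setOf_eq, Set.mem_Icc, abs_le]
    constructor <;> intro h <;> constructor <;> linarith [h.1, h.2]
  rw [step1]
  refine ENNReal.toReal_mono (measure_ne_top μ _) ?_
  rw [step2, ← step4]
  exact lintegral_mono step3

end main3

/-- Stochastic delta function principle: if `Ξₙ` are upper half-plane valued
random variables converging in distribution to a real random variable `X`, and `V` is a real
random variable independent of `X` and of each `Ξₙ` with absolutely continuous distribution
of density `ρ ∈ L¹` satisfying `ρ ≤ c (1_ε * ρ)` for all `ε ∈ (0,δ)`, then for each such `ε`,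
`limsup_n 𝔼[π⁻¹ Im((V-Ξₙ)⁻¹)] ≤ c (2ε)⁻¹ ℙ(|V-X| ≤ ε)`. -/
theorem stmt9 {Ω : Type*} [MeasurableSpace Ω] (μ : Measure Ω) [IsProbabilityMeasure μ]
    (Ξ : ℕ → Ω → ℂ) (hΞmeas : ∀ n, Measurable (Ξ n))
    (hΞup : ∀ n ω, 0 < (Ξ n ω).im)
    (X : Ω → ℝ) (hXmeas : Measurable X)
    (hweak : ∀ f : BoundedContinuousFunction ℂ ℝ,
      Tendsto (fun n => ∫ ω, f (Ξ n ω) ∂μ) atTop (𝓝 (∫ ω, f ((X ω : ℂ)) ∂μ)))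
    (V : Ω → ℝ) (hVmeas : Measurable V)
    (hVX : IndepFun V X μ) (hVΞ : ∀ n, IndepFun V (Ξ n) μ)
    (ρ : ℝ → ℝ) (hρmeas : Measurable ρ) (hρ0 : ∀ v, 0 ≤ ρ v) (hρL1 : Integrable ρ)
    (hρdens : μ.map V = (volume : Measure ℝ).withDensity (fun v => ENNReal.ofReal (ρ v)))
    (δ : ℝ) (hδ : 0 < δ) (c : ℝ)
    (hconv : ∀ ε ∈ Set.Ioo 0 δ, ∀ᵐ v ∂(volume : Measure ℝ),
      ρ v ≤ c * ((1 / (2 * ε)) * ∫ w in (v - ε)..(v + ε), ρ w)) :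
    ∀ ε ∈ Set.Ioo 0 δ,
      limsup (fun n => ∫ ω, (Real.pi)⁻¹ * (((V ω : ℂ) - Ξ n ω)⁻¹).im ∂μ) atTop ≤
        c * ((1 / (2 * ε)) * (μ {ω | |V ω - X ω| ≤ ε}).toReal) := by
  intro ε hεmem
  obtain ⟨hε0, hεδ⟩ := hεmem
  have hconvε := hconv ε ⟨hε0, hεδ⟩
  -- nonnegativity of c
  have hc : 0 ≤ c := by
    by_contra hneg
    push_neg at hneg
    have hρ0' : ∀ᵐ v ∂(volume : Measure ℝ), ρ v ≤ 0 := by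
      filter_upwards [hconvε] with v hv
      have hI : 0 ≤ ∫ w in (v - ε)..(v + ε), ρ w :=
        intervalIntegral.integral_nonneg (by linarith) (fun w _ => hρ0 w)
      have h2 : 0 ≤ (1 / (2 * ε)) * ∫ w in (v - ε)..(v + ε), ρ w :=
        mul_nonneg (by positivity) hI
      nlinarith
    haveI : IsProbabilityMeasure (μ.map V) := Measure.isProbabilityMeasure_map hVmeas.aemeasurable
    have h1 : (μ.map V) Set.univ = 1 := measure_univ
    rw [hρdens, withDensity_apply _ MeasurableSet.univ, Measure.restrict_univ] at h1
    have h0 : ∫⁻ v, ENNReal.ofReal (ρ v) ∂(volume : Measure ℝ) = 0 := by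
      rw [lintegral_eq_zero_iff hρmeas.ennreal_ofReal]
      filter_upwards [hρ0'] with v hv
      simpa using ENNReal.ofReal_eq_zero.2 hv
    rw [h0] at h1
    exact zero_ne_one h1
  have hcc : 0 ≤ c * (1 / (2 * ε)) := mul_nonneg hc (by positivity)
  have hggcont : Continuous (gg ρ ε) := gg_continuous hρmeas hρ0 hρL1 hε0
  -- the bounded continuous function
  set M := ∫ w, ρ w with hM
  let G : BoundedContinuousFunction ℂ ℝ :=
    ⟨⟨gg ρ ε, hggcont⟩, ⟨M, fun x y => by
      have h1 := gg_nonneg hρmeas hρ0 hρL1 hε0 x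
      have h2 := gg_le hρmeas hρ0 hρL1 hε0 x
      have h3 := gg_nonneg hρmeas hρ0 hρL1 hε0 y
      have h4 := gg_le hρmeas hρ0 hρL1 hε0 y
      rw [Real.dist_eq, abs_le]
      constructor <;> simp only [ContinuousMap.coe_mk] <;> linarith⟩⟩
  have htend : Tendsto (fun n => ∫ ω, gg ρ ε (Ξ n ω) ∂μ) atTop
      (𝓝 (∫ ω, gg ρ ε ((X ω : ℂ)) ∂μ)) := hweak G
  have key : ∀ n, ∫ ω, (Real.pi)⁻¹ * (((V ω : ℂ) - Ξ n ω)⁻¹).im ∂μ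
      ≤ (c * (1 / (2 * ε))) * ∫ ω, gg ρ ε (Ξ n ω) ∂μ := fun n =>
    key_bound μ hρmeas hρ0 hρL1 hε0 hc hconvε V hVmeas hρdens (Ξ n) (hΞmeas n)
      (hΞup n) (hVΞ n)
  have hfin : ∫ ω, gg ρ ε ((X ω : ℂ)) ∂μ ≤ (μ {ω | |V ω - X ω| ≤ ε}).toReal :=
    gg_X_bound μ hρmeas hρ0 hρL1 hε0 V hVmeas hρdens X hXmeas hVX
  have hRlim : Tendsto (fun n => (c * (1 / (2 * ε))) * ∫ ω, gg ρ ε (Ξ n ω) ∂μ) atTop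
      (𝓝 ((c * (1 / (2 * ε))) * ∫ ω, gg ρ ε ((X ω : ℂ)) ∂μ)) := htend.const_mul _
  have hL0 : ∀ n, 0 ≤ ∫ ω, (Real.pi)⁻¹ * (((V ω : ℂ) - Ξ n ω)⁻¹).im ∂μ := by
    intro n
    refine integral_nonneg fun ω => mul_nonneg (by positivity) ?_
    rw [inv_im_eq]
    exact div_nonneg (hΞup n ω).le (by positivity)
  have hcobdd : IsCoboundedUnder (· ≤ ·) atTop
      (fun n => ∫ ω, (Real.pi)⁻¹ * (((V ω : ℂ) - Ξ n ω)⁻¹).im ∂μ) :=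
    isCoboundedUnder_le_of_eventually_le atTop (Eventually.of_forall hL0)
  have hbdd : IsBoundedUnder (· ≤ ·) atTop
      (fun n => (c * (1 / (2 * ε))) * ∫ ω, gg ρ ε (Ξ n ω) ∂μ) :=
    hRlim.isBoundedUnder_le
  calc limsup (fun n => ∫ ω, (Real.pi)⁻¹ * (((V ω : ℂ) - Ξ n ω)⁻¹).im ∂μ) atTop
      ≤ limsup (fun n => (c * (1 / (2 * ε))) * ∫ ω, gg ρ ε (Ξ n ω) ∂μ) atTop :=
        limsup_le_limsup (Eventually.of_forall key) hcobdd hbdd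
    _ = (c * (1 / (2 * ε))) * ∫ ω, gg ρ ε ((X ω : ℂ)) ∂μ := hRlim.limsup_eq
    _ ≤ (c * (1 / (2 * ε))) * (μ {ω | |V ω - X ω| ≤ ε}).toReal :=
        mul_le_mul_of_nonneg_left hfin hcc
    _ = c * ((1 / (2 * ε)) * (μ {ω | |V ω - X ω| ≤ ε}).toReal) := by ring
end

section
/- Let G be a countable set, H₀ a bounded self-adjoint operator on ℓ²(G), ψ ∈ ℓ²(G) a unit vector, and for v ∈ ℝ let H_v = H₀ + v P_ψ where P_ψ is the orthogonal projection onto ℂψ. Let S ⊂ ℝ be a countable set and ρ an atomless (continuous) probability measure on ℝ. Then the set {v ∈ ℝ : there exist E ∈ S and φ ∈ ℓ²(G) with φ ≠ 0, H_v φ = Eφ, and ⟨ψ, φ⟩ ≠ 0} has ρ-measure zero. -/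
open MeasureTheory

/-- Spectral averaging null set: for the rank-one family `H_v = H₀ + vP_ψ`,
a countable set `S ⊂ ℝ` and an atomless probability measure `ρ` on ℝ, the set of couplings
`v` for which some `E ∈ S` is an eigenvalue of `H_v` with eigenvector not orthogonal to `ψ`
has `ρ`-measure zero. -/
theorem stmt11 {G : Type*} [Countable G]
    (H₀ : lp (fun _ : G => ℂ) 2 →L[ℂ] lp (fun _ : G => ℂ) 2) (hH₀ : IsSelfAdjoint H₀)
    (ψ : lp (fun _ : G => ℂ) 2) (hψ : ‖ψ‖ = 1)
    (P : lp (fun _ : G => ℂ) 2 →L[ℂ] lp (fun _ : G => ℂ) 2)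
    (hP : ∀ φ, P φ = (inner ℂ ψ φ : ℂ) • ψ)
    (S : Set ℝ) (hS : S.Countable)
    (ρ : Measure ℝ) [IsProbabilityMeasure ρ] (hρ : ∀ t : ℝ, ρ {t} = 0) :
    ρ {v : ℝ | ∃ E ∈ S, ∃ φ : lp (fun _ : G => ℂ) 2,
      φ ≠ 0 ∧ (H₀ + (v : ℂ) • P) φ = (E : ℂ) • φ ∧ (inner ℂ ψ φ : ℂ) ≠ 0} = 0 := by
  have : NullSingletonClass ρ := ⟨hρ⟩
  -- for each fixed E, at most one v can satisfy the eigenvalue condition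
  have key : ∀ E : ℝ, {v : ℝ | ∃ φ : lp (fun _ : G => ℂ) 2,
      φ ≠ 0 ∧ (H₀ + (v : ℂ) • P) φ = (E : ℂ) • φ ∧ (inner ℂ ψ φ : ℂ) ≠ 0}.Subsingleton := by
    intro E v hv v' hv'
    obtain ⟨φ, -, hφ, hc⟩ := hv
    obtain ⟨φ', -, hφ', hc'⟩ := hv'
    set c : ℂ := inner ℂ ψ φ
    set c' : ℂ := inner ℂ ψ φ'
    have h1 : H₀ φ = (E : ℂ) • φ - (v : ℂ) • c • ψ := by
      have := hφ
      rw [ContinuousLinearMap.add_apply, ContinuousLinearMap.smul_apply, hP] at this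
      rw [← this]; abel
    have h1' : H₀ φ' = (E : ℂ) • φ' - (v' : ℂ) • c' • ψ := by
      have := hφ'
      rw [ContinuousLinearMap.add_apply, ContinuousLinearMap.smul_apply, hP] at this
      rw [← this]; abel
    have hsym := hH₀.isSymmetric φ' φ
    simp only [ContinuousLinearMap.coe_coe] at hsym
    rw [h1, h1'] at hsym
    simp only [inner_sub_left, inner_sub_right, inner_smul_left, inner_smul_right,
      map_mul, Complex.conj_ofReal, RingHom.id_apply] at hsym
    have hψφ' : (inner ℂ φ' ψ : ℂ) = starRingEnd ℂ c' := by
      simpa [c'] using (inner_conj_symm ψ φ').symm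
    have hψφ : (inner ℂ ψ φ : ℂ) = c := rfl
    rw [hψφ', hψφ] at hsym
    have hkey : (v : ℂ) * (c * starRingEnd ℂ c') = (v' : ℂ) * (c * starRingEnd ℂ c') := by
      linear_combination hsym
    have hne : c * starRingEnd ℂ c' ≠ 0 :=
      mul_ne_zero hc (by simp at hc ⊢; exact hc')
    have : (v : ℂ) = (v' : ℂ) := mul_right_cancel₀ hne hkey
    exact_mod_cast this
  have hcount : {v : ℝ | ∃ E ∈ S, ∃ φ : lp (fun _ : G => ℂ) 2,
      φ ≠ 0 ∧ (H₀ + (v : ℂ) • P) φ = (E : ℂ) • φ ∧ (inner ℂ ψ φ : ℂ) ≠ 0}.Countable := by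
    have : {v : ℝ | ∃ E ∈ S, ∃ φ : lp (fun _ : G => ℂ) 2,
        φ ≠ 0 ∧ (H₀ + (v : ℂ) • P) φ = (E : ℂ) • φ ∧ (inner ℂ ψ φ : ℂ) ≠ 0}
        = ⋃ E ∈ S, {v : ℝ | ∃ φ : lp (fun _ : G => ℂ) 2,
        φ ≠ 0 ∧ (H₀ + (v : ℂ) • P) φ = (E : ℂ) • φ ∧ (inner ℂ ψ φ : ℂ) ≠ 0} := by
      ext v; simp [Set.mem_iUnion]
    rw [this]
    exact hS.biUnion fun E _ => (key E).countable
  exact hcount.measure_zero ρ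
end

section
/- Let 𝓗 be a complex Hilbert space, H₀ a bounded self-adjoint operator on 𝓗, ψ ∈ 𝓗 a unit vector, and for v ∈ ℝ let H_v = H₀ + v P_ψ where P_ψ is the orthogonal projection onto ℂψ. Fix E ∈ ℝ. Then there is at most one value v ∈ ℝ ∖ {0} for which there exists φ ∈ 𝓗 with φ ≠ 0, H_v φ = Eφ, and ⟨ψ, φ⟩ ≠ 0. In other words, if v, v' ∈ ℝ ∖ {0} both admit eigenvectors of H_v, respectively H_{v'}, with eigenvalue E which are not orthogonal to ψ, then v = v'. -/
/-- For the rank-one perturbation family `H_v = H₀ + v P_ψ`, at a fixed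
energy `E` there is at most one nonzero coupling `v` admitting an eigenvector with
eigenvalue `E` not orthogonal to `ψ`. -/
theorem stmt12 {𝓗 : Type*} [NormedAddCommGroup 𝓗] [InnerProductSpace ℂ 𝓗] [CompleteSpace 𝓗]
    (H₀ : 𝓗 →L[ℂ] 𝓗) (hH₀ : IsSelfAdjoint H₀)
    (ψ : 𝓗) (hψ : ‖ψ‖ = 1)
    (P : 𝓗 →L[ℂ] 𝓗) (hP : ∀ φ, P φ = (inner ℂ ψ φ : ℂ) • ψ)
    (E : ℝ) (v v' : ℝ) (hv : v ≠ 0) (hv' : v' ≠ 0)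
    (φ φ' : 𝓗) (hφ : φ ≠ 0) (hφ' : φ' ≠ 0)
    (h1 : (H₀ + (v : ℂ) • P) φ = (E : ℂ) • φ)
    (h2 : (H₀ + (v' : ℂ) • P) φ' = (E : ℂ) • φ')
    (ho : (inner ℂ ψ φ : ℂ) ≠ 0) (ho' : (inner ℂ ψ φ' : ℂ) ≠ 0) :
    v = v' := by
  have e1 := congrArg (fun x => (inner ℂ φ' x : ℂ)) h1
  simp only [ContinuousLinearMap.add_apply, ContinuousLinearMap.smul_apply, hP,
    inner_add_right, inner_smul_right, smul_eq_mul] at e1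
  have e2 := congrArg (fun x => (inner ℂ φ x : ℂ)) h2
  simp only [ContinuousLinearMap.add_apply, ContinuousLinearMap.smul_apply, hP,
    inner_add_right, inner_smul_right, smul_eq_mul] at e2
  have e2c := congrArg (starRingEnd ℂ) e2
  simp only [map_add, map_mul, inner_conj_symm, Complex.conj_ofReal] at e2c
  have hsym : (inner ℂ (H₀ φ') φ : ℂ) = inner ℂ φ' (H₀ φ) := hH₀.isSymmetric φ' φ
  rw [hsym] at e2c
  have key : ((v : ℂ) - v') * (inner ℂ ψ φ * inner ℂ φ' ψ) = 0 := by
    have h := inner_conj_symm (𝕜 := ℂ) φ' ψ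
    linear_combination e1 - e2c
  have hpsi : (inner ℂ φ' ψ : ℂ) ≠ 0 := by
    intro h
    apply ho'
    rw [← inner_conj_symm, h, map_zero]
  rcases mul_eq_zero.mp key with h | h
  · exact_mod_cast sub_eq_zero.mp h
  · exact absurd h (mul_ne_zero ho hpsi)
end

section
/- Let G be a countable set, H₀ a bounded self-adjoint operator on ℓ²(G), ψ ∈ ℓ²(G) a unit vector, and for v ∈ ℝ let H_v = H₀ + v P_ψ where P_ψ is the orthogonal projection onto ℂψ. Fix v ≠ 0 and E ∈ ℝ, and let γ := lim_{η↓0} ‖(H₀ − (E + iη))⁻¹ ψ‖², a limit which exists in (0, ∞] by monotonicity. Then the following are equivalent: (i) the orthogonal projection of ψ onto ker(H_v − E) is nonzero (i.e. E is an eigenvalue of H_v whose eigenspace is not orthogonal to ψ); (ii) γ < ∞ and lim_{η↓0} ⟨ψ, (H₀ − (E + iη))⁻¹ ψ⟩ exists and equals −1/v. Moreover, if these conditions hold, then ⟨ψ, P ψ⟩ = v⁻² / γ, where P denotes the orthogonal projection onto ker(H_v − E). -/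
open Filter Topology
noncomputable section
set_option linter.unusedSectionVars false
namespace S16
variable {H : Type*} [NormedAddCommGroup H] [InnerProductSpace ℂ H] [CompleteSpace H]

local notation "⟪" x ", " y "⟫" => @inner ℂ _ _ x y

def aa (T : H →L[ℂ] H) (η : ℝ) : H →L[ℂ] H := T - ((η : ℂ) * Complex.I) • 1

def RR (T : H →L[ℂ] H) (η : ℝ) : H →L[ℂ] H := Ring.inverse (aa T η)

lemma isUnit_aa {T : H →L[ℂ] H} (hT : IsSelfAdjoint T) {η : ℝ} (hη : η ≠ 0) :
    IsUnit (aa T η) := by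
  have h1 : ((η : ℂ) * Complex.I) ∉ spectrum ℂ T := by
    intro hmem
    have h2 := hT.mem_spectrum_eq_re hmem
    apply hη
    have := congrArg Complex.im h2
    simpa using this
  have h2 := spectrum.notMem_iff.mp h1
  rw [Algebra.algebraMap_eq_smul_one] at h2
  have h3 : aa T η = -(((η : ℂ) * Complex.I) • 1 - T) := by simp [aa]
  rw [h3]
  exact h2.neg

lemma aa_mul_RR {T : H →L[ℂ] H} (hT : IsSelfAdjoint T) {η : ℝ} (hη : η ≠ 0) :
    aa T η * RR T η = 1 := Ring.mul_inverse_cancel (aa T η) (isUnit_aa hT hη)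

lemma RR_mul_aa {T : H →L[ℂ] H} (hT : IsSelfAdjoint T) {η : ℝ} (hη : η ≠ 0) :
    RR T η * aa T η = 1 := Ring.inverse_mul_cancel (aa T η) (isUnit_aa hT hη)

lemma aa_RR {T : H →L[ℂ] H} (hT : IsSelfAdjoint T) {η : ℝ} (hη : η ≠ 0) (x : H) :
    aa T η (RR T η x) = x := by
  calc aa T η (RR T η x) = (aa T η * RR T η) x := rfl
  _ = x := by rw [aa_mul_RR hT hη]; rfl

lemma RR_aa {T : H →L[ℂ] H} (hT : IsSelfAdjoint T) {η : ℝ} (hη : η ≠ 0) (x : H) :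
    RR T η (aa T η x) = x := by
  calc RR T η (aa T η x) = (RR T η * aa T η) x := rfl
  _ = x := by rw [RR_mul_aa hT hη]; rfl

lemma star_aa {T : H →L[ℂ] H} (hT : IsSelfAdjoint T) (η : ℝ) :
    star (aa T η) = aa T (-η) := by
  simp only [aa, star_sub, star_smul, star_one, hT.star_eq]
  congr 1
  simp only [RCLike.star_def, map_mul, Complex.conj_I, Complex.conj_ofReal]
  push_cast
  ring_nf

lemma star_RR {T : H →L[ℂ] H} (hT : IsSelfAdjoint T) {η : ℝ} (hη : η ≠ 0) :
    star (RR T η) = RR T (-η) := by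
  have h1 : star (RR T η) * aa T (-η) = 1 := by
    rw [← star_aa hT η, ← star_mul]
    simp only [RR, aa_mul_RR hT hη, star_one]
    exact congrArg star (aa_mul_RR hT hη) ▸ star_one _
  have h2 := congrArg (· * RR T (-η)) h1
  simpa [mul_assoc, aa_mul_RR hT (neg_ne_zero.mpr hη)] using h2

lemma inner_RR_left {T : H →L[ℂ] H} (hT : IsSelfAdjoint T) {η : ℝ} (hη : η ≠ 0) (x y : H) :
    ⟪RR T η x, y⟫ = ⟪x, RR T (-η) y⟫ := by
  have : RR T (-η) = ContinuousLinearMap.adjoint (RR T η) := by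
    rw [← ContinuousLinearMap.star_eq_adjoint, star_RR hT hη]
  rw [this, ContinuousLinearMap.adjoint_inner_right]


lemma inner_self_im {T : H →L[ℂ] H} (hT : IsSelfAdjoint T) (x : H) : (⟪T x, x⟫).im = 0 := by
  have h1 : ⟪T x, x⟫ = ⟪x, T x⟫ := hT.isSymmetric x x
  exact Complex.conj_eq_iff_im.mp (by rw [inner_conj_symm]; exact h1.symm)

lemma aa_apply (T : H →L[ℂ] H) (η : ℝ) (u : H) :
    aa T η u = T u - ((η : ℂ) * Complex.I) • u := by
  simp [aa, ContinuousLinearMap.sub_apply]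

lemma norm_aa_sq {T : H →L[ℂ] H} (hT : IsSelfAdjoint T) (η : ℝ) (u : H) :
    ‖aa T η u‖ ^ 2 = ‖T u‖ ^ 2 + η ^ 2 * ‖u‖ ^ 2 := by
  rw [aa_apply, @norm_sub_sq ℂ]
  have h1 : RCLike.re ⟪T u, ((η : ℂ) * Complex.I) • u⟫ = 0 := by
    rw [inner_smul_right]
    have h2 := inner_self_im hT u
    simp only [RCLike.re_to_complex]
    rw [Complex.mul_re]
    simp [Complex.mul_im, Complex.mul_re, h2]
  rw [h1, norm_smul]
  simp [mul_pow, norm_mul]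

lemma norm_RR_le {T : H →L[ℂ] H} (hT : IsSelfAdjoint T) {η : ℝ} (hη : η ≠ 0) (x : H) :
    ‖RR T η x‖ ≤ |η|⁻¹ * ‖x‖ := by
  set u := RR T η x with hu
  have h1 : ‖x‖ ^ 2 = ‖T u‖ ^ 2 + η ^ 2 * ‖u‖ ^ 2 := by
    rw [← norm_aa_sq hT η u, aa_RR hT hη]
  have h2 : η ^ 2 * ‖u‖ ^ 2 ≤ ‖x‖ ^ 2 := by nlinarith [sq_nonneg ‖T u‖]
  have h3 : (|η| * ‖u‖) ^ 2 ≤ ‖x‖ ^ 2 := by rw [mul_pow, sq_abs]; exact h2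
  have h4 : |η| * ‖u‖ ≤ ‖x‖ := by
    nlinarith [h3, abs_nonneg η, norm_nonneg u, norm_nonneg x]
  have hpos : (0:ℝ) < |η| := abs_pos.mpr hη
  rw [inv_mul_eq_div, le_div_iff₀ hpos]
  nlinarith [h4]

lemma commute_aa (T : H →L[ℂ] H) (η η' : ℝ) : Commute (aa T η) (aa T η') := by
  unfold aa Commute SemiconjBy
  have key : ∀ c c' : ℂ, (T - c • 1) * (T - c' • 1)
      = T * T - c • T - c' • T + (c' * c) • 1 := by
    intro c c'
    simp only [sub_mul, mul_sub, smul_mul_assoc, mul_smul_comm, one_mul, mul_one, smul_smul,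
      smul_sub, smul_add, smul_neg]
    abel
  rw [key, key, mul_comm ((η:ℂ) * Complex.I) ((η':ℂ) * Complex.I)]
  abel

lemma commute_RR {T : H →L[ℂ] H} (hT : IsSelfAdjoint T) {η η' : ℝ} (hη : η ≠ 0)
    (hη' : η' ≠ 0) : RR T η * RR T η' = RR T η' * RR T η := by
  obtain ⟨u, hu⟩ := isUnit_aa hT hη
  obtain ⟨u', hu'⟩ := isUnit_aa hT hη'
  have h1 : RR T η = ↑u⁻¹ := by rw [RR, ← hu, Ring.inverse_unit]
  have h2 : RR T η' = ↑u'⁻¹ := by rw [RR, ← hu', Ring.inverse_unit]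
  have hc : Commute (u : H →L[ℂ] H) (u' : H →L[ℂ] H) := by
    rw [hu, hu']; exact commute_aa T η η'
  rw [h1, h2]
  exact hc.units_inv_left.units_inv_right

lemma RR_res {T : H →L[ℂ] H} (hT : IsSelfAdjoint T) {η η' : ℝ} (hη : η ≠ 0) (hη' : η' ≠ 0) :
    RR T η - RR T η' = (((η - η' : ℝ) : ℂ) * Complex.I) • (RR T η * RR T η') := by
  have hsub : aa T η' - aa T η = (((η - η' : ℝ) : ℂ) * Complex.I) • 1 := by
    unfold aa
    rw [sub_sub_sub_cancel_left, ← sub_smul]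
    congr 1
    push_cast
    ring
  calc RR T η - RR T η'
      = RR T η * (aa T η' * RR T η') - (RR T η * aa T η) * RR T η' := by
        rw [aa_mul_RR hT hη', RR_mul_aa hT hη, mul_one, one_mul]
    _ = RR T η * ((aa T η' - aa T η) * RR T η') := by
        rw [sub_mul, mul_sub, mul_assoc]
    _ = (((η - η' : ℝ) : ℂ) * Complex.I) • (RR T η * RR T η') := by
        rw [hsub, smul_mul_assoc, one_mul, mul_smul_comm]

lemma norm_diff_sq {T : H →L[ℂ] H} (hT : IsSelfAdjoint T) {η η' : ℝ} (hη : η ≠ 0)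
    (hη' : η' ≠ 0) (ψ : H) :
    ‖RR T η ψ - RR T η' ψ‖ ^ 2 = (η - η') ^ 2 * ‖RR T η (RR T η' ψ)‖ ^ 2 := by
  have h1 : RR T η ψ - RR T η' ψ = (((η - η' : ℝ) : ℂ) * Complex.I) • (RR T η (RR T η' ψ)) := by
    have := congrArg (fun (S : H →L[ℂ] H) => S ψ) (RR_res hT hη hη')
    simpa [ContinuousLinearMap.sub_apply] using this
  rw [h1, norm_smul, mul_pow]
  congr 1
  rw [norm_mul, Complex.norm_I, mul_one,
    Complex.norm_real, Real.norm_eq_abs, sq_abs]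

lemma f_diff {T : H →L[ℂ] H} (hT : IsSelfAdjoint T) {η η' : ℝ} (hη : η ≠ 0)
    (hη' : η' ≠ 0) (ψ : H) :
    ‖RR T η' ψ‖ ^ 2 - ‖RR T η ψ‖ ^ 2 = (η ^ 2 - η' ^ 2) * ‖RR T η (RR T η' ψ)‖ ^ 2 := by
  set u := RR T η (RR T η' ψ) with hu
  have hcomm : RR T η' (RR T η ψ) = u := by
    have := congrArg (fun (S : H →L[ℂ] H) => S ψ) (commute_RR hT hη' hη)
    simpa using this
  have e1 : ‖RR T η' ψ‖ ^ 2 = ‖T u‖ ^ 2 + η ^ 2 * ‖u‖ ^ 2 := by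
    rw [← norm_aa_sq hT η u, hu, aa_RR hT hη]
  have e2 : ‖RR T η ψ‖ ^ 2 = ‖T u‖ ^ 2 + η' ^ 2 * ‖u‖ ^ 2 := by
    rw [← norm_aa_sq hT η' u, ← hcomm, aa_RR hT hη']
  rw [e1, e2]
  ring_nf


lemma f_anti {T : H →L[ℂ] H} (hT : IsSelfAdjoint T) (ψ : H) {η η' : ℝ} (hη' : 0 < η')
    (hle : η' ≤ η) : ‖RR T η ψ‖ ^ 2 ≤ ‖RR T η' ψ‖ ^ 2 := by
  have hη : 0 < η := lt_of_lt_of_le hη' hle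
  have hd := f_diff hT (ne_of_gt hη) (ne_of_gt hη') ψ
  have ht := sq_nonneg ‖RR T η (RR T η' ψ)‖
  have hsq : (0:ℝ) ≤ η ^ 2 - η' ^ 2 := by nlinarith
  nlinarith [mul_nonneg hsq ht]

lemma cauchy_bound {T : H →L[ℂ] H} (hT : IsSelfAdjoint T) (ψ : H) {η η' : ℝ} (hη' : 0 < η')
    (hle : η' ≤ η) :
    ‖RR T η ψ - RR T η' ψ‖ ^ 2 ≤ ‖RR T η' ψ‖ ^ 2 - ‖RR T η ψ‖ ^ 2 := by
  have hη : 0 < η := lt_of_lt_of_le hη' hle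
  have h1 := norm_diff_sq hT (ne_of_gt hη) (ne_of_gt hη') ψ
  have h2 := f_diff hT (ne_of_gt hη) (ne_of_gt hη') ψ
  have ht := sq_nonneg ‖RR T η (RR T η' ψ)‖
  have hkey : (0:ℝ) ≤ (η ^ 2 - η' ^ 2 - (η - η') ^ 2) := by nlinarith
  nlinarith [mul_nonneg hkey ht]

lemma exists_limit {T : H →L[ℂ] H} (hT : IsSelfAdjoint T) (ψ : H) {M : ℝ}
    (hbdd : ∀ η : ℝ, 0 < η → ‖RR T η ψ‖ ^ 2 ≤ M) :
    ∃ φ₀ : H, Tendsto (fun η : ℝ => RR T η ψ) (𝓝[>] 0) (𝓝 φ₀) ∧ T φ₀ = ψ ∧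
      Tendsto (fun η : ℝ => ‖RR T η ψ‖ ^ 2) (𝓝[>] 0) (𝓝 (‖φ₀‖ ^ 2)) ∧
      (∀ η : ℝ, 0 < η → ‖RR T η ψ‖ ^ 2 ≤ ‖φ₀‖ ^ 2) := by
  set f : ℝ → ℝ := fun η => ‖RR T η ψ‖ ^ 2 with hf
  set h : ℝ → H := fun η => RR T η ψ with hh
  set s : Set ℝ := Set.Ioi (0 : ℝ)
  set ℓ : ℝ := sSup (f '' Set.Ioi 0) with hℓ
  have hne : (f '' Set.Ioi 0).Nonempty := ⟨f 1, ⟨1, by norm_num, rfl⟩⟩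
  have hba : BddAbove (f '' Set.Ioi 0) := ⟨M, by rintro x ⟨η, hη, rfl⟩; exact hbdd η hη⟩
  have hle : ∀ η : ℝ, 0 < η → f η ≤ ℓ := fun η hη => le_csSup hba ⟨η, hη, rfl⟩
  -- f tends to ℓ
  have htf : Tendsto f (𝓝[>] 0) (𝓝 ℓ) := by
    rw [Metric.tendsto_nhdsWithin_nhds]
    intro ε hε
    obtain ⟨x, ⟨η₀, hη₀, rfl⟩, hx⟩ := exists_lt_of_lt_csSup hne (by linarith : ℓ - ε < ℓ)
    refine ⟨η₀, hη₀, fun {η} hη hd => ?_⟩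
    have hηpos : (0:ℝ) < η := hη
    have hηlt : η < η₀ := by
      have : |η| < η₀ := by simpa [Real.dist_eq] using hd
      linarith [abs_of_pos hηpos ▸ this]
    have h1 : f η₀ ≤ f η := f_anti hT ψ hηpos (le_of_lt hηlt)
    have h2 : f η ≤ ℓ := hle η hηpos
    rw [Real.dist_eq]
    rw [abs_lt]
    constructor <;> linarith
  -- Cauchy
  have hcauchy : Cauchy (Filter.map h (𝓝[>] (0:ℝ))) := by
    refine Metric.cauchy_iff.mpr ⟨Filter.map_neBot, fun ε hε => ?_⟩
    have hε2 : (0:ℝ) < ε ^ 2 / 4 := by positivity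
    obtain ⟨x, ⟨η₀, hη₀, rfl⟩, hx⟩ := exists_lt_of_lt_csSup hne
      (by linarith : ℓ - ε ^ 2 / 4 < ℓ)
    refine ⟨h '' Set.Ioc 0 η₀, Filter.image_mem_map (Ioc_mem_nhdsGT_of_mem ⟨le_refl _, hη₀⟩),
      ?_⟩
    rintro x ⟨η, hη, rfl⟩ y ⟨η', hη', rfl⟩
    have key : ∀ a b : ℝ, 0 < b → b ≤ a → a ≤ η₀ → dist (h a) (h b) < ε := by
      intro a b hb hba' haη₀
      have h1 := cauchy_bound hT ψ hb hba'
      have h2 : f a ≥ f η₀ := f_anti hT ψ (lt_of_lt_of_le hb hba') haη₀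
      have h3 : f b ≤ ℓ := hle b hb
      have h4 : ‖h a - h b‖ ^ 2 ≤ ε ^ 2 / 4 := by
        calc ‖h a - h b‖ ^ 2 ≤ f b - f a := h1
        _ ≤ ε ^ 2 / 4 := by linarith
      rw [dist_eq_norm]
      nlinarith [norm_nonneg (h a - h b)]
    rcases le_total η' η with hc | hc
    · exact key η η' hη'.1 hc hη.2
    · rw [dist_comm]; exact key η' η hη.1 hc hη'.2
  obtain ⟨φ₀, hφ₀⟩ := CompleteSpace.complete hcauchy
  have hten : Tendsto h (𝓝[>] 0) (𝓝 φ₀) := hφ₀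
  -- T φ₀ = ψ
  have hTφ₀ : T φ₀ = ψ := by
    have h1 : ∀ η : ℝ, 0 < η → T (h η) = ψ + ((η : ℂ) * Complex.I) • h η := by
      intro η hη
      have := aa_RR hT (ne_of_gt hη) ψ
      rw [aa_apply] at this
      have : T (h η) - ((η : ℂ) * Complex.I) • h η = ψ := this
      linear_combination (norm := module) this
    have h2 : Tendsto (fun η : ℝ => T (h η)) (𝓝[>] 0) (𝓝 (T φ₀)) :=
      (T.continuous.tendsto φ₀).comp hten
    have h3 : Tendsto (fun η : ℝ => ((η : ℂ) * Complex.I) • h η) (𝓝[>] 0) (𝓝 0) := by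
      apply squeeze_zero_norm' (a := fun η : ℝ => |η| * Real.sqrt M)
      · filter_upwards [self_mem_nhdsWithin] with η hη
        have hηpos : (0:ℝ) < η := hη
        have : ‖h η‖ ≤ Real.sqrt M := by
          rw [← Real.sqrt_sq (norm_nonneg (h η))]
          exact Real.sqrt_le_sqrt (hbdd η hηpos)
        calc ‖((η : ℂ) * Complex.I) • h η‖ = ‖(η : ℂ) * Complex.I‖ * ‖h η‖ := norm_smul _ _
        _ = |η| * ‖h η‖ := by
            simp [Complex.norm_real]
        _ ≤ |η| * Real.sqrt M := by
            exact mul_le_mul_of_nonneg_left this (abs_nonneg η)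
      · have : Tendsto (fun η : ℝ => |η| * Real.sqrt M) (𝓝 0) (𝓝 (|0| * Real.sqrt M)) := by
          exact ((continuous_abs.mul continuous_const).tendsto 0)
        simpa using this.mono_left nhdsWithin_le_nhds
    have h4 : Tendsto (fun η : ℝ => T (h η)) (𝓝[>] 0) (𝓝 (ψ + 0)) := by
      have := Tendsto.add (tendsto_const_nhds (x := ψ) (f := 𝓝[>] (0:ℝ))) h3
      apply this.congr'
      filter_upwards [self_mem_nhdsWithin] with η hη
      exact (h1 η hη).symm
    have := tendsto_nhds_unique h2 h4
    simpa using this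
  have hnorm : Tendsto f (𝓝[>] 0) (𝓝 (‖φ₀‖ ^ 2)) := by
    have : Tendsto (fun η : ℝ => ‖h η‖ ^ 2) (𝓝[>] 0) (𝓝 (‖φ₀‖ ^ 2)) := by
      exact ((continuous_norm.pow 2).tendsto φ₀).comp hten
    exact this
  have hℓeq : ℓ = ‖φ₀‖ ^ 2 := tendsto_nhds_unique htf hnorm
  exact ⟨φ₀, hten, hTφ₀, hnorm, fun η hη => hℓeq ▸ hle η hη⟩


/-- kernel vectors are orthogonal to ψ and to the limit φ₀ -/
lemma ker_orth {T : H →L[ℂ] H} (hT : IsSelfAdjoint T) {ψ φ₀ : H}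
    (hten : Tendsto (fun η : ℝ => RR T η ψ) (𝓝[>] 0) (𝓝 φ₀))
    {w : H} (hw : T w = 0) : ⟪w, ψ⟫ = 0 ∧ ⟪w, φ₀⟫ = 0 := by
  -- RR T (-η) w = ((η:ℂ) * I)⁻¹ • w for η ≠ 0
  have hRw : ∀ η : ℝ, η ≠ 0 → RR T (-η) w = (((η : ℂ) * Complex.I)⁻¹) • w := by
    intro η hη
    have hne : ((η : ℂ) * Complex.I) ≠ 0 := by
      simp [Complex.ext_iff, Complex.I_ne_zero, hη]
    have h1 : aa T (-η) w = ((η : ℂ) * Complex.I) • w := by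
      rw [aa_apply, hw]
      push_cast
      module
    have h2 := RR_aa hT (neg_ne_zero.mpr hη) w
    rw [h1, map_smul] at h2
    rw [eq_comm, inv_smul_eq_iff₀ hne]
    exact h2.symm
  have hinner : ∀ η : ℝ, 0 < η →
      ⟪w, RR T η ψ⟫ = (starRingEnd ℂ) (((η : ℂ) * Complex.I)⁻¹) * ⟪w, ψ⟫ := by
    intro η hη
    have h0 := inner_RR_left hT (neg_ne_zero.mpr (ne_of_gt hη)) w ψ
    rw [neg_neg] at h0
    rw [← h0, hRw η (ne_of_gt hη), inner_smul_left]
  have htinner : Tendsto (fun η : ℝ => ⟪w, RR T η ψ⟫) (𝓝[>] 0) (𝓝 ⟪w, φ₀⟫) := by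
    exact ((continuous_const.inner continuous_id).tendsto φ₀).comp hten
  have hwψ : ⟪w, ψ⟫ = 0 := by
    by_contra hne
    have hats : Tendsto (fun η : ℝ => ‖⟪w, RR T η ψ⟫‖) (𝓝[>] 0) atTop := by
      have heq : ∀ η : ℝ, 0 < η → ‖⟪w, RR T η ψ⟫‖ = η⁻¹ * ‖⟪w, ψ⟫‖ := by
        intro η hη
        rw [hinner η hη, norm_mul, RCLike.norm_conj, norm_inv, norm_mul]
        simp [Complex.norm_real, abs_of_pos hη]
      have h2 : Tendsto (fun η : ℝ => η⁻¹ * ‖⟪w, ψ⟫‖) (𝓝[>] 0) atTop := by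
        apply Tendsto.atTop_mul_const (norm_pos_iff.mpr hne)
        exact tendsto_inv_nhdsGT_zero
      apply h2.congr'
      filter_upwards [self_mem_nhdsWithin] with η hη
      exact (heq η hη).symm
    exact not_tendsto_atTop_of_tendsto_nhds (htinner.norm) hats
  refine ⟨hwψ, ?_⟩
  have : Tendsto (fun η : ℝ => ⟪w, RR T η ψ⟫) (𝓝[>] 0) (𝓝 0) := by
    apply tendsto_const_nhds.congr'
    filter_upwards [self_mem_nhdsWithin] with η hη
    rw [hinner η hη, hwψ, mul_zero]
  exact tendsto_nhds_unique htinner this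

/-- forward direction computations -/
lemma forward {T : H →L[ℂ] H} (hT : IsSelfAdjoint T) {ψ φ : H} {c : ℂ} (hc : c ≠ 0)
    (hφ : T φ = c • ψ) :
    (∀ η : ℝ, η ≠ 0 → ‖RR T η ψ‖ ≤ 2 * ‖φ‖ / ‖c‖) ∧
      Tendsto (fun η : ℝ => ⟪ψ, RR T η ψ⟫) (𝓝[>] 0) (𝓝 (⟪ψ, φ⟫ / c)) := by
  have hid : ∀ η : ℝ, η ≠ 0 →
      RR T η ψ = c⁻¹ • (φ + ((η : ℂ) * Complex.I) • RR T η φ) := by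
    intro η hη
    have h1 : aa T η φ = c • ψ - ((η : ℂ) * Complex.I) • φ := by rw [aa_apply, hφ]
    have h2 := RR_aa hT hη φ
    rw [h1, map_sub, map_smul, map_smul] at h2
    -- h2 : c • RR T η ψ - (ηI) • RR T η φ = φ
    have h3 : c • RR T η ψ = φ + ((η : ℂ) * Complex.I) • RR T η φ := by
      linear_combination (norm := module) h2
    have := congrArg (fun x => c⁻¹ • x) h3
    simpa [smul_smul, inv_mul_cancel₀ hc] using this
  have hbound : ∀ η : ℝ, η ≠ 0 → ‖RR T η ψ‖ ≤ 2 * ‖φ‖ / ‖c‖ := by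
    intro η hη
    rw [hid η hη, norm_smul, norm_inv]
    have h1 : ‖RR T η φ‖ ≤ |η|⁻¹ * ‖φ‖ := norm_RR_le hT hη φ
    have h2 : ‖φ + ((η : ℂ) * Complex.I) • RR T η φ‖ ≤ ‖φ‖ + |η| * ‖RR T η φ‖ := by
      calc ‖φ + ((η : ℂ) * Complex.I) • RR T η φ‖ ≤ ‖φ‖ + ‖((η : ℂ) * Complex.I) • RR T η φ‖ :=
        norm_add_le _ _
      _ = ‖φ‖ + |η| * ‖RR T η φ‖ := by
          rw [norm_smul, norm_mul]
          simp [Complex.norm_real]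
    have h3 : |η| * ‖RR T η φ‖ ≤ ‖φ‖ := by
      have habs : (0:ℝ) < |η| := abs_pos.mpr hη
      calc |η| * ‖RR T η φ‖ ≤ |η| * (|η|⁻¹ * ‖φ‖) := by
            exact mul_le_mul_of_nonneg_left h1 (abs_nonneg η)
      _ = ‖φ‖ := by field_simp
    have hcpos : (0:ℝ) < ‖c‖ := norm_pos_iff.mpr hc
    have h4 : ‖φ + ((η : ℂ) * Complex.I) • RR T η φ‖ ≤ 2 * ‖φ‖ := by linarith
    calc ‖c‖⁻¹ * ‖φ + ((η : ℂ) * Complex.I) • RR T η φ‖ ≤ ‖c‖⁻¹ * (2 * ‖φ‖) :=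
        mul_le_mul_of_nonneg_left h4 (inv_nonneg.mpr (norm_nonneg c))
    _ = 2 * ‖φ‖ / ‖c‖ := (div_eq_inv_mul (2 * ‖φ‖) ‖c‖).symm
  refine ⟨hbound, ?_⟩
  rw [← tendsto_sub_nhds_zero_iff]
  apply squeeze_zero_norm' (a := fun η : ℝ => η * (‖c‖⁻¹ * (2 * ‖φ‖ / ‖c‖ * ‖φ‖)))
  · filter_upwards [self_mem_nhdsWithin] with η hη
    have hη0 : η ≠ 0 := ne_of_gt hη
    have heq : ⟪ψ, RR T η ψ⟫ - ⟪ψ, φ⟫ / c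
        = c⁻¹ * (((η : ℂ) * Complex.I) * ⟪ψ, RR T η φ⟫) := by
      rw [hid η hη0, inner_smul_right, inner_add_right, inner_smul_right]
      field_simp
      ring
    rw [heq]
    have h5 : ⟪ψ, RR T η φ⟫ = ⟪RR T (-η) ψ, φ⟫ := by
      have h0 := inner_RR_left hT (neg_ne_zero.mpr hη0) ψ φ
      rw [neg_neg] at h0
      exact h0.symm
    have h6 : ‖⟪ψ, RR T η φ⟫‖ ≤ 2 * ‖φ‖ / ‖c‖ * ‖φ‖ := by
      rw [h5]
      calc ‖⟪RR T (-η) ψ, φ⟫‖ ≤ ‖RR T (-η) ψ‖ * ‖φ‖ := norm_inner_le_norm _ _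
      _ ≤ 2 * ‖φ‖ / ‖c‖ * ‖φ‖ :=
          mul_le_mul_of_nonneg_right (hbound (-η) (neg_ne_zero.mpr hη0)) (norm_nonneg φ)
    rw [norm_mul, norm_mul, norm_inv]
    have h7 : ‖((η : ℂ) * Complex.I)‖ = η := by
      rw [norm_mul]
      simp [Complex.norm_real, abs_of_pos (show (0:ℝ) < η from hη)]
    rw [h7]
    calc ‖c‖⁻¹ * (η * ‖⟪ψ, RR T η φ⟫‖) ≤ ‖c‖⁻¹ * (η * (2 * ‖φ‖ / ‖c‖ * ‖φ‖)) := by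
          apply mul_le_mul_of_nonneg_left _ (inv_nonneg.mpr (norm_nonneg c))
          exact mul_le_mul_of_nonneg_left h6 (le_of_lt hη)
    _ = η * (‖c‖⁻¹ * (2 * ‖φ‖ / ‖c‖ * ‖φ‖)) := by ring
  · have : Tendsto (fun η : ℝ => η * (‖c‖⁻¹ * (2 * ‖φ‖ / ‖c‖ * ‖φ‖))) (𝓝 0)
        (𝓝 (0 * (‖c‖⁻¹ * (2 * ‖φ‖ / ‖c‖ * ‖φ‖)))) :=
      (continuous_id.mul continuous_const).tendsto 0
    simpa using this.mono_left nhdsWithin_le_nhds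

end S16
open Filter Topology
open scoped ENNReal

local notation "⟪" x ", " y "⟫" => @inner ℂ _ _ x y

set_option maxHeartbeats 2000000 in
/-- Simon–Wolff rank-one criterion for a point mass: for `H_v = H₀ + vP_ψ`
with `v ≠ 0` and `E ∈ ℝ`, setting `γ = lim_{η↓0} ‖(H₀-(E+iη))⁻¹ψ‖²` (which, by monotonicity,
equals the supremum over `η > 0`), the eigenspace `ker(H_v - E)` is not orthogonal to `ψ`
iff `γ < ∞` and `⟨ψ, (H₀-(E+iη))⁻¹ψ⟩ → -1/v` as `η ↓ 0`; moreover in that case the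
orthogonal projection `χ` of `ψ` onto `ker(H_v - E)` satisfies `⟨ψ, χ⟩ = v⁻²/γ`. -/
theorem stmt16 {G : Type*} [Countable G]
    (H₀ : lp (fun _ : G => ℂ) 2 →L[ℂ] lp (fun _ : G => ℂ) 2) (hH₀ : IsSelfAdjoint H₀)
    (ψ : lp (fun _ : G => ℂ) 2) (hψ : ‖ψ‖ = 1)
    (P : lp (fun _ : G => ℂ) 2 →L[ℂ] lp (fun _ : G => ℂ) 2)
    (hP : ∀ φ, P φ = (inner ℂ ψ φ : ℂ) • ψ)
    (v : ℝ) (hv : v ≠ 0) (E : ℝ) (γ : ℝ≥0∞)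
    (hγ : γ = ⨆ η : {η : ℝ // 0 < η}, ENNReal.ofReal
      (‖Ring.inverse (H₀ - ((E : ℂ) + (η : ℝ) * Complex.I) • 1) ψ‖ ^ 2)) :
    ((∃ φ, φ ≠ 0 ∧ (H₀ + (v : ℂ) • P) φ = (E : ℂ) • φ ∧ (inner ℂ ψ φ : ℂ) ≠ 0) ↔
      (γ < ⊤ ∧ Tendsto
        (fun η : ℝ => (inner ℂ ψ (Ring.inverse (H₀ - ((E : ℂ) + η * Complex.I) • 1) ψ) : ℂ))
        (𝓝[>] 0) (𝓝 (-1 / v)))) ∧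
    ((∃ φ, φ ≠ 0 ∧ (H₀ + (v : ℂ) • P) φ = (E : ℂ) • φ ∧ (inner ℂ ψ φ : ℂ) ≠ 0) →
      ∀ χ : lp (fun _ : G => ℂ) 2,
        (H₀ + (v : ℂ) • P) χ = (E : ℂ) • χ →
        (∀ φ, (H₀ + (v : ℂ) • P) φ = (E : ℂ) • φ → (inner ℂ (ψ - χ) φ : ℂ) = 0) →
        (inner ℂ ψ χ : ℂ) = (((v ^ 2)⁻¹ / γ.toReal : ℝ) : ℂ)) := by
  classical
  set T : lp (fun _ : G => ℂ) 2 →L[ℂ] lp (fun _ : G => ℂ) 2 := H₀ - (E : ℂ) • 1 with hTdef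
  have hT : IsSelfAdjoint T := by
    rw [IsSelfAdjoint, hTdef, star_sub, star_smul, star_one, hH₀.star_eq]
    congr 1
    simp [Complex.conj_ofReal]
  have haa : ∀ η : ℝ, H₀ - ((E : ℂ) + (η : ℝ) * Complex.I) • 1 = S16.aa T η := by
    intro η
    rw [S16.aa, hTdef, add_smul, sub_add_eq_sub_sub]
  have hvC : ((v : ℂ)) ≠ 0 := Complex.ofReal_ne_zero.mpr hv
  have hγ' : γ = ⨆ η : {η : ℝ // 0 < η},
      ENNReal.ofReal (‖S16.RR T (η : ℝ) ψ‖ ^ 2) := by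
    rw [hγ]
    congr 1
    funext η
    rw [haa]
    rfl
  -- eigen-equation translation
  have heig : ∀ φ : lp (fun _ : G => ℂ) 2,
      ((H₀ + (v : ℂ) • P) φ = (E : ℂ) • φ) ↔ T φ = (-((v : ℂ) * ⟪ψ, φ⟫)) • ψ := by
    intro φ
    have h1 : (H₀ + (v : ℂ) • P) φ = H₀ φ + ((v : ℂ) * ⟪ψ, φ⟫) • ψ := by
      rw [ContinuousLinearMap.add_apply, ContinuousLinearMap.smul_apply, hP φ, smul_smul]
    have h2 : T φ = H₀ φ - (E : ℂ) • φ := by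
      rw [hTdef, ContinuousLinearMap.sub_apply, ContinuousLinearMap.smul_apply,
        ContinuousLinearMap.one_apply]
    constructor
    · intro h
      rw [h1] at h
      rw [h2]
      linear_combination (norm := module) h
    · intro h
      rw [h2] at h
      rw [h1]
      linear_combination (norm := module) h

  have hfun : (fun η : ℝ => (inner ℂ ψ ((Ring.inverse (H₀ - ((E : ℂ) + η * Complex.I) • 1)) ψ) : ℂ))
      = fun η : ℝ => ⟪ψ, S16.RR T η ψ⟫ := by
    funext η
    rw [haa η]
    rfl
  have hlim : -1 / (v : ℂ) ≠ 0 := div_ne_zero (neg_ne_zero.mpr one_ne_zero) hvC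
  -- forward implication
  have hfwd : (∃ φ, φ ≠ 0 ∧ (H₀ + (v : ℂ) • P) φ = (E : ℂ) • φ ∧ (inner ℂ ψ φ : ℂ) ≠ 0) →
      γ < ⊤ ∧ Tendsto (fun η : ℝ => ⟪ψ, S16.RR T η ψ⟫) (𝓝[>] 0) (𝓝 (-1 / v)) := by
    rintro ⟨φ, hφ0, hφeig, hφinner⟩
    have hc : (-((v : ℂ) * ⟪ψ, φ⟫)) ≠ 0 := by
      simp only [neg_ne_zero, mul_ne_zero_iff]
      exact ⟨hvC, hφinner⟩
    have hTφ : T φ = (-((v : ℂ) * ⟪ψ, φ⟫)) • ψ := (heig φ).mp hφeig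
    obtain ⟨hb, ht⟩ := S16.forward hT hc hTφ
    constructor
    · calc γ = ⨆ η : {η : ℝ // 0 < η}, ENNReal.ofReal (‖S16.RR T (η : ℝ) ψ‖ ^ 2) := hγ'
      _ ≤ ENNReal.ofReal ((2 * ‖φ‖ / ‖-((v : ℂ) * ⟪ψ, φ⟫)‖) ^ 2) := by
          refine iSup_le fun η => ENNReal.ofReal_le_ofReal ?_
          have h1 := hb (η : ℝ) (ne_of_gt η.2)
          have hnn : (0:ℝ) ≤ ‖S16.RR T (η : ℝ) ψ‖ := norm_nonneg _
          nlinarith [h1]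
      _ < ⊤ := ENNReal.ofReal_lt_top
    · have hdiv : ⟪ψ, φ⟫ / (-((v : ℂ) * ⟪ψ, φ⟫)) = -1 / (v : ℂ) := by
        rw [div_eq_div_iff hc hvC]
        ring
      rw [← hdiv]
      exact ht
  -- backward construction
  have hbwd : (γ < ⊤ ∧ Tendsto (fun η : ℝ => ⟪ψ, S16.RR T η ψ⟫) (𝓝[>] 0) (𝓝 (-1 / v))) →
      ∃ φ₀, Tendsto (fun η : ℝ => S16.RR T η ψ) (𝓝[>] 0) (𝓝 φ₀) ∧ T φ₀ = ψ ∧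
        ⟪ψ, φ₀⟫ = -1 / (v : ℂ) ∧ ‖φ₀‖ ^ 2 = γ.toReal ∧ φ₀ ≠ 0 := by
    rintro ⟨hγtop, ht⟩
    have hbdd : ∀ η : ℝ, 0 < η → ‖S16.RR T η ψ‖ ^ 2 ≤ γ.toReal := by
      intro η hη
      have h1 : ENNReal.ofReal (‖S16.RR T η ψ‖ ^ 2) ≤ γ := by
        rw [hγ']
        exact le_iSup (fun η : {η : ℝ // 0 < η} =>
          ENNReal.ofReal (‖S16.RR T (η : ℝ) ψ‖ ^ 2)) ⟨η, hη⟩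
      exact (ENNReal.ofReal_le_iff_le_toReal (ne_of_lt hγtop)).mp h1
    obtain ⟨φ₀, hten, hTφ₀, hnormt, hle⟩ := S16.exists_limit hT ψ hbdd
    have hinner : Tendsto (fun η : ℝ => ⟪ψ, S16.RR T η ψ⟫) (𝓝[>] 0) (𝓝 ⟪ψ, φ₀⟫) :=
      ((continuous_const.inner continuous_id).tendsto φ₀).comp hten
    have hψφ₀ : ⟪ψ, φ₀⟫ = -1 / (v : ℂ) := tendsto_nhds_unique hinner ht
    have hφ₀ne : φ₀ ≠ 0 := by
      intro h0
      rw [h0, inner_zero_right] at hψφ₀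
      exact hlim hψφ₀.symm
    have hγeq : ‖φ₀‖ ^ 2 = γ.toReal := by
      have hub : γ ≤ ENNReal.ofReal (‖φ₀‖ ^ 2) := by
        rw [hγ']
        exact iSup_le fun η => ENNReal.ofReal_le_ofReal (hle (η : ℝ) η.2)
      have hub' : γ.toReal ≤ ‖φ₀‖ ^ 2 := by
        have := ENNReal.toReal_mono (ENNReal.ofReal_ne_top) hub
        rwa [ENNReal.toReal_ofReal (by positivity)] at this
      have hlb : ‖φ₀‖ ^ 2 ≤ γ.toReal := by
        apply le_of_tendsto hnormt
        filter_upwards [self_mem_nhdsWithin] with η hη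
        exact hbdd η hη
      linarith
    exact ⟨φ₀, hten, hTφ₀, hψφ₀, hγeq, hφ₀ne⟩
  have hone : (-((v : ℂ) * (-1 / (v : ℂ)))) = 1 := by field_simp
  constructor
  · constructor
    · intro hex
      rw [hfun]
      exact hfwd hex
    · intro hy
      rw [hfun] at hy
      obtain ⟨φ₀, hten, hTφ₀, hψφ₀, hγeq, hφ₀ne⟩ := hbwd hy
      refine ⟨φ₀, hφ₀ne, ?_, by rw [hψφ₀]; exact hlim⟩
      rw [heig, hψφ₀, hone, one_smul]
      exact hTφ₀
  · intro hex χ hχeig horth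
    obtain ⟨φ₀, hten, hTφ₀, hψφ₀, hγeq, hφ₀ne⟩ := hbwd (hfwd hex)
    set S : ℝ := γ.toReal with hSdef
    have hS : ‖φ₀‖ ^ 2 = S := hγeq
    have hSpos : 0 < S := by
      rw [← hS]
      have : 0 < ‖φ₀‖ := norm_pos_iff.mpr hφ₀ne
      positivity
    have hSne : S ≠ 0 := ne_of_gt hSpos
    have hφ₀eig : (H₀ + (v : ℂ) • P) φ₀ = (E : ℂ) • φ₀ := by
      rw [heig, hψφ₀, hone, one_smul]
      exact hTφ₀
    set c : ℝ := -1 / (v * S) with hcdef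
    set u : lp (fun _ : G => ℂ) 2 := χ - ((c : ℂ)) • φ₀ with hu
    have hueig : (H₀ + (v : ℂ) • P) u = (E : ℂ) • u := by
      rw [hu, map_sub, map_smul, hχeig, hφ₀eig]
      module
    have hχφ₀ : ⟪χ, φ₀⟫ = -1 / (v : ℂ) := by
      have h0 := horth φ₀ hφ₀eig
      rw [inner_sub_left, sub_eq_zero] at h0
      rw [← h0, hψφ₀]
    have hinnerself : ⟪φ₀, φ₀⟫ = ((S : ℝ) : ℂ) := by
      rw [inner_self_eq_norm_sq_to_K]
      have h0 := Complex.ofReal_inj.mpr hS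
      push_cast at h0
      exact h0
    have hφ₀χ : ⟪φ₀, χ⟫ = -1 / (v : ℂ) := by
      rw [← inner_conj_symm, hχφ₀, map_div₀, map_neg, map_one, Complex.conj_ofReal]
    have hφ₀u : ⟪φ₀, u⟫ = 0 := by
      rw [hu, inner_sub_right, inner_smul_right, hinnerself, hφ₀χ, hcdef]
      have hvS : ((v : ℂ) * (S : ℂ)) ≠ 0 := mul_ne_zero hvC (Complex.ofReal_ne_zero.mpr hSne)
      push_cast
      field_simp
      rw [div_self (Complex.ofReal_ne_zero.mpr hSne)]
      ring
    have hψu : ⟪ψ, u⟫ = ⟪χ, u⟫ := by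
      have h0 := horth u hueig
      rw [inner_sub_left, sub_eq_zero] at h0
      exact h0
    set r : ℝ := ‖u‖ ^ 2 with hrdef
    have hχu : χ = u + ((c : ℂ)) • φ₀ := by rw [hu]; abel
    have hr : ⟪ψ, u⟫ = ((r : ℝ) : ℂ) := by
      rw [hψu, hχu, inner_add_left, inner_smul_left, hφ₀u, mul_zero, add_zero,
        inner_self_eq_norm_sq_to_K, hrdef]
      norm_cast
    have hTu : T u = (-((v : ℂ) * ((r : ℝ) : ℂ))) • ψ := by
      have h0 := (heig u).mp hueig
      rwa [hr] at h0
    set w : lp (fun _ : G => ℂ) 2 := u + (((v * r : ℝ)) : ℂ) • φ₀ with hw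
    have hTw : T w = 0 := by
      rw [hw, map_add, map_smul, hTu, hTφ₀]
      push_cast
      module
    obtain ⟨hw1, hw2⟩ := S16.ker_orth hT hten hTw
    have huφ₀ : ⟪u, φ₀⟫ = 0 := by
      rw [← inner_conj_symm, hφ₀u, map_zero]
    have hvrS : ((v * r : ℝ) : ℂ) * ((S : ℝ) : ℂ) = 0 := by
      have h0 := hw2
      rw [hw, inner_add_left, huφ₀, inner_smul_left, hinnerself, zero_add,
        Complex.conj_ofReal] at h0
      exact h0
    have hr0 : r = 0 := by
      have h1 : (v * r) * S = 0 := by exact_mod_cast hvrS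
      rcases mul_eq_zero.mp h1 with h2 | h2
      · rcases mul_eq_zero.mp h2 with h3 | h3
        · exact absurd h3 hv
        · exact h3
      · exact absurd h2 hSne
    have hu0 : u = 0 := by
      have h1 : ‖u‖ ^ 2 = 0 := hr0
      have h2 : ‖u‖ = 0 := by
        have := sq_eq_zero_iff.mp h1
        exact this
      exact norm_eq_zero.mp h2
    have hχeq : χ = ((c : ℂ)) • φ₀ := by
      rw [hχu, hu0, zero_add]
    rw [hχeq, inner_smul_right, hψφ₀, hcdef]
    push_cast
    field_simp
end
end

section
/- Let I be a countable index set, let (Ω_i, 𝔉_i, μ_i)_{i∈I} be probability spaces, and let (Ω, μ) be the product probability space with coordinates (X_i)_{i∈I} independent. For a subset S ⊆ I let 𝔊_S denote the sub-σ-algebra of the product σ-algebra generated by the coordinates (X_i)_{i∈I∖S}, and for f ∈ L²(Ω, μ) let P_S f := 𝔼[f | 𝔊_S]. Then for every finite subset Λ ⊂ I: 𝔼[|f − P_Λ f|²] ≤ Σ_{u∈Λ} 𝔼[|f − P_{{u}} f|²]. -/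
open MeasureTheory MeasurableSpace Set ProbabilityTheory Filter

namespace Stmt19Aux

variable {α : Type*}

lemma memℒp_two_condexp {m m0 : MeasurableSpace α} {μ : Measure α} [IsFiniteMeasure μ]
    (hm : m ≤ m0) {f : α → ℝ} (hf : MemLp f 2 μ) : MemLp (μ[f|m]) 2 μ := by
  have h2 : (condExpL2 ℝ ℝ hm (hf.toLp f) : α → ℝ) =ᵐ[μ] μ[f|m] := by
    refine ae_eq_condExp_of_forall_setIntegral_eq hm (hf.integrable one_le_two)
      (fun s hs hμs => integrableOn_condExpL2_of_measure_ne_top hm hμs.ne _)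
      (fun s hs hμs => ?_) (aestronglyMeasurable_condExpL2 hm _)
    rw [integral_condExpL2_eq hm (hf.toLp f) hs hμs.ne]
    exact setIntegral_congr_ae (hm s hs) ((hf.coeFn_toLp).mono fun x hx _ => hx)
  exact (Lp.memLp _).ae_eq h2

lemma integral_sq_sub_condexp {m m0 : MeasurableSpace α} {μ : Measure α} [IsProbabilityMeasure μ]
    (hm : m ≤ m0) {f : α → ℝ} (hf : MemLp f 2 μ) :
    ∫ x, (f x - (μ[f|m]) x) ^ 2 ∂μ = ∫ x, f x ^ 2 ∂μ - ∫ x, (μ[f|m]) x ^ 2 ∂μ := by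
  have hP : MemLp (μ[f|m]) 2 μ := memℒp_two_condexp hm hf
  have hfint : Integrable f μ := hf.integrable one_le_two
  have hPf : Integrable (μ[f|m] * f) μ := by
    have h := hP.smul hf (p := 2) (q := 2) (r := 1)
    rw [memLp_one_iff_integrable] at h
    exact h.congr (Eventually.of_forall fun x => by simp [smul_eq_mul, mul_comm])
  have hkey : ∫ x, (μ[f|m]) x * f x ∂μ = ∫ x, (μ[f|m]) x ^ 2 ∂μ := by
    have h1 : μ[μ[f|m] * f|m] =ᵐ[μ] μ[f|m] * μ[f|m] :=
      condExp_mul_of_stronglyMeasurable_left stronglyMeasurable_condExp hPf hfint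
    calc ∫ x, (μ[f|m]) x * f x ∂μ = ∫ x, (μ[μ[f|m] * f|m]) x ∂μ := (integral_condExp hm).symm
      _ = ∫ x, ((μ[f|m]) * (μ[f|m])) x ∂μ := integral_congr_ae h1
      _ = ∫ x, (μ[f|m]) x ^ 2 ∂μ := by
          refine integral_congr_ae (Eventually.of_forall fun x => ?_)
          simp [sq]
  have hexp : ∫ x, (f x - (μ[f|m]) x) ^ 2 ∂μ
      = ∫ x, (f x ^ 2 - 2 * ((μ[f|m]) x * f x) + (μ[f|m]) x ^ 2) ∂μ :=
    integral_congr_ae (Eventually.of_forall fun x => by ring)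
  have hPf' : Integrable (fun x => (μ[f|m]) x * f x) μ := hPf
  rw [hexp, integral_add (f := fun x => f x ^ 2 - 2 * ((μ[f|m]) x * f x))
      (g := fun x => (μ[f|m]) x ^ 2) (hf.integrable_sq.sub (hPf'.const_mul 2)) hP.integrable_sq,
    integral_sub (f := fun x => f x ^ 2) (g := fun x => 2 * ((μ[f|m]) x * f x))
      hf.integrable_sq (hPf'.const_mul 2)]
  have h2 : ∫ x, 2 * ((μ[f|m]) x * f x) ∂μ = 2 * ∫ x, (μ[f|m]) x * f x ∂μ := integral_const_mul 2 _
  rw [h2, hkey]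
  ring

lemma integral_sq_condexp_le {m m0 : MeasurableSpace α} {μ : Measure α} [IsProbabilityMeasure μ]
    (hm : m ≤ m0) {f : α → ℝ} (hf : MemLp f 2 μ) :
    ∫ x, (μ[f|m]) x ^ 2 ∂μ ≤ ∫ x, f x ^ 2 ∂μ := by
  have h := integral_sq_sub_condexp hm hf
  have h0 : 0 ≤ ∫ x, (f x - (μ[f|m]) x) ^ 2 ∂μ := integral_nonneg fun x => sq_nonneg _
  linarith
lemma condexp_sup_indep {mA mB mC m0 : MeasurableSpace α} {μ : Measure α}
    [IsProbabilityMeasure μ] (hA0 : mA ≤ m0) (hB0 : mB ≤ m0) (hC0 : mC ≤ m0) (hAC : mA ≤ mC)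
    (hBC : Indep mB mC μ) {h : α → ℝ} (hh : Integrable h μ)
    (hhm : AEStronglyMeasurable[mC] h μ) :
    μ[h|mA ⊔ mB] =ᵐ[μ] μ[h|mA] := by
  have hAB0 : mA ⊔ mB ≤ m0 := sup_le hA0 hB0
  have key : ∀ (X : α → ℝ), Integrable X μ → AEStronglyMeasurable[mC] X μ →
      ∀ {a b : Set α}, MeasurableSet[mA] a → MeasurableSet[mB] b →
      ∫ x in a ∩ b, X x ∂μ = (μ b).toReal * ∫ x in a, X x ∂μ := by
    intro X hXint hXm a b ha hb
    have haC : MeasurableSet[mC] a := hAC a ha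
    set X' := hXm.mk X with hX'def
    have hX'sm : StronglyMeasurable[mC] X' := hXm.stronglyMeasurable_mk
    have hXX' : X =ᵐ[μ] X' := hXm.ae_eq_mk
    have hX'int : Integrable X' μ := hXint.congr hXX'
    have hInd : IndepFun (a.indicator X') (b.indicator fun _ => (1 : ℝ)) μ := by
      rw [IndepFun_iff_Indep]
      refine indep_of_indep_of_le_right (indep_of_indep_of_le_left hBC.symm ?_) ?_
      · exact ((hX'sm.indicator haC).measurable).comap_le
      · exact ((@measurable_const ℝ α _ mB 1).indicator hb).comap_le
    have hprod : (a.indicator X' * b.indicator fun _ => (1 : ℝ)) = (a ∩ b).indicator X' := by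
      funext x
      by_cases hxa : x ∈ a <;> by_cases hxb : x ∈ b <;>
        simp [Set.indicator, hxa, hxb, Set.mem_inter_iff]
    have hIa : Integrable (a.indicator X') μ := hX'int.indicator (hC0 a haC)
    have hIb : Integrable (b.indicator fun _ => (1 : ℝ)) μ :=
      (integrable_const 1).indicator (hB0 b hb)
    have hmul := hInd.integral_mul_eq_mul_integral hIa.aestronglyMeasurable hIb.aestronglyMeasurable
    rw [hprod, integral_indicator ((hC0 a haC).inter (hB0 b hb)), integral_indicator (hC0 a haC),
      integral_indicator (hB0 b hb)] at hmul
    have hb1 : ∫ x in b, (1 : ℝ) ∂μ = (μ b).toReal := by simp; rfl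
    calc ∫ x in a ∩ b, X x ∂μ = ∫ x in a ∩ b, X' x ∂μ :=
          integral_congr_ae (ae_restrict_of_ae hXX')
      _ = (∫ x in a, X' x ∂μ) * (μ b).toReal := by rw [hmul, hb1]
      _ = (μ b).toReal * ∫ x in a, X x ∂μ := by
          rw [show ∫ x in a, X' x ∂μ = ∫ x in a, X x ∂μ from
            integral_congr_ae (ae_restrict_of_ae hXX'.symm)]
          ring
  have hgen : (mA ⊔ mB) = MeasurableSpace.generateFrom
      {s : Set α | ∃ a b, MeasurableSet[mA] a ∧ MeasurableSet[mB] b ∧ s = a ∩ b} := by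
    refine le_antisymm (sup_le ?_ ?_) (MeasurableSpace.generateFrom_le ?_)
    · exact fun t ht => MeasurableSpace.measurableSet_generateFrom
        ⟨t, Set.univ, ht, MeasurableSet.univ, (Set.inter_univ t).symm⟩
    · exact fun t ht => MeasurableSpace.measurableSet_generateFrom
        ⟨Set.univ, t, MeasurableSet.univ, ht, (Set.univ_inter t).symm⟩
    · rintro t ⟨a, b, ha, hb, rfl⟩
      exact ((le_sup_left : mA ≤ mA ⊔ mB) a ha).inter ((le_sup_right : mB ≤ mA ⊔ mB) b hb)
  refine Filter.EventuallyEq.symm (ae_eq_condExp_of_forall_setIntegral_eq hAB0 hh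
    (fun s _ _ => integrable_condExp.integrableOn) (fun s hs _ => ?_)
    (stronglyMeasurable_condExp.mono (le_sup_left : mA ≤ mA ⊔ mB)).aestronglyMeasurable)
  refine MeasurableSpace.induction_on_inter (m := mA ⊔ mB)
    (C := fun t _ => ∫ x in t, (μ[h|mA]) x ∂μ = ∫ x in t, h x ∂μ) hgen ?_ ?_ ?_ ?_ ?_ _ hs
  · rintro t ⟨a, b, ha, hb, rfl⟩ t' ⟨a', b', ha', hb', rfl⟩ _
    exact ⟨a ∩ a', b ∩ b', ha.inter ha', hb.inter hb', by rw [Set.inter_inter_inter_comm]⟩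
  · simp
  · rintro t ⟨a, b, ha, hb, rfl⟩
    rw [key _ integrable_condExp (stronglyMeasurable_condExp.mono hAC).aestronglyMeasurable ha hb,
      key _ hh hhm ha hb, setIntegral_condExp hA0 hh ha]
  · intro t htm hteq
    have ht0 : MeasurableSet t := hAB0 t htm
    have h1 := integral_add_compl ht0 (integrable_condExp : Integrable (μ[h|mA]) μ)
    have h2 := integral_add_compl ht0 hh
    have h3 : ∫ x, (μ[h|mA]) x ∂μ = ∫ x, h x ∂μ := integral_condExp hA0
    linarith
  · intro g hdisj hgm hgeq
    rw [integral_iUnion (fun i => hAB0 _ (hgm i)) hdisj integrable_condExp.integrableOn,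
      integral_iUnion (fun i => hAB0 _ (hgm i)) hdisj hh.integrableOn]
    exact tsum_congr hgeq


end Stmt19Aux

open MeasureTheory

/-- Orthogonality (Efron–Stein type) bound for conditional expectations on
a countable product probability space: with `𝔊_S` the σ-algebra generated by the coordinates
outside `S` and `P_S f = 𝔼[f | 𝔊_S]`, for every finite `Λ`,
`𝔼[|f - P_Λ f|²] ≤ ∑_{u∈Λ} 𝔼[|f - P_{u} f|²]`. -/
theorem stmt19 {ι : Type*} [Countable ι] (Ωi : ι → Type*) [∀ i, MeasurableSpace (Ωi i)]
    (μi : ∀ i, Measure (Ωi i)) [∀ i, IsProbabilityMeasure (μi i)]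
    (μ : Measure (∀ i, Ωi i)) [IsProbabilityMeasure μ]
    (hμ : ∀ (s : Finset ι) (A : ∀ i, Set (Ωi i)), (∀ i ∈ s, MeasurableSet (A i)) →
      μ {ω | ∀ i ∈ s, ω i ∈ A i} = ∏ i ∈ s, μi i (A i))
    (m : Set ι → MeasurableSpace (∀ i, Ωi i))
    (hm : ∀ S : Set ι, m S =
      ⨆ i ∈ Sᶜ, MeasurableSpace.comap (fun ω => ω i) inferInstance)
    (f : (∀ i, Ωi i) → ℝ) (hf : MemLp f 2 μ)
    (Λ : Finset ι) :
    ∫ ω, |f ω - (μ[f|m ↑Λ]) ω| ^ 2 ∂μ ≤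
      ∑ u ∈ Λ, ∫ ω, |f ω - (μ[f|m ({u} : Set ι)]) ω| ^ 2 ∂μ := by
  classical
  simp only [sq_abs]
  have h_le : ∀ i : ι, MeasurableSpace.comap (fun ω : ∀ i, Ωi i => ω i) inferInstance ≤
      MeasurableSpace.pi := fun i => (measurable_pi_apply i).comap_le
  have hmle : ∀ S : Set ι, m S ≤ MeasurableSpace.pi := by
    intro S; rw [hm S]
    exact iSup₂_le fun i _ => h_le i
  have hmono : ∀ {S T : Set ι}, S ⊆ T → m T ≤ m S := by
    intro S T hST
    rw [hm S, hm T]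
    exact biSup_mono fun i hiT hiS => hiT (hST hiS)
  have hfint : Integrable f μ := hf.integrable one_le_two
  have hPmem : ∀ S : Set ι, MemLp (μ[f|m S]) 2 μ := fun S =>
    Stmt19Aux.memℒp_two_condexp (hmle S) hf
  -- independence of coordinate σ-algebras
  have hiIndep : ProbabilityTheory.iIndep
      (fun i => MeasurableSpace.comap (fun ω : ∀ i, Ωi i => ω i) inferInstance) μ := by
    refine ProbabilityTheory.iIndepSets.iIndep h_le
      (fun i => {s : Set (∀ i, Ωi i) | ∃ A : Set (Ωi i), MeasurableSet A ∧
        s = (fun ω => ω i) ⁻¹' A}) ?_ ?_ ?_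
    · rintro i s ⟨A, hA, rfl⟩ t ⟨B, hB, rfl⟩ -
      exact ⟨A ∩ B, hA.inter hB, rfl⟩
    · intro i
      rw [MeasurableSpace.comap_eq_generateFrom]
      congr 1
      ext t
      simp only [Set.mem_image, Set.mem_setOf_eq]
      exact ⟨fun ⟨A, hA, h⟩ => ⟨A, hA, h.symm⟩, fun ⟨A, hA, h⟩ => ⟨A, hA, h.symm⟩⟩
    · rw [ProbabilityTheory.iIndepSets_iff]
      intro s g hg
      have hex : ∀ i ∈ s, ∃ A : Set (Ωi i), MeasurableSet A ∧ g i = (fun ω => ω i) ⁻¹' A := hg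
      choose! A hA1 hA2 using hex
      have hg_eq : ⋂ i ∈ s, g i = {ω : ∀ i, Ωi i | ∀ i ∈ s, ω i ∈ A i} := by
        ext ω
        simp only [Set.mem_iInter, Set.mem_setOf_eq]
        refine forall₂_congr fun i hi => ?_
        rw [hA2 i hi]; rfl
      rw [hg_eq, hμ s A hA1]
      refine Finset.prod_congr rfl fun i hi => ?_
      have hgi : g i = {ω : ∀ k, Ωi k | ∀ j ∈ ({i} : Finset ι), ω j ∈ A j} := by
        rw [hA2 i hi]; ext ω; simp
      rw [hgi, hμ {i} A (fun j hj => by rw [Finset.mem_singleton.mp hj]; exact hA1 i hi),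
        Finset.prod_singleton]
  -- main induction
  induction Λ using Finset.induction_on with
  | empty =>
      have hm0 : m (↑(∅ : Finset ι)) = MeasurableSpace.pi := by
        rw [Finset.coe_empty, hm]
        simp only [Set.compl_empty, Set.mem_univ, iSup_pos]
        rfl
      have hid : μ[f|m (↑(∅ : Finset ι))] =ᵐ[μ] f := by
        rw [hm0]
        obtain ⟨g, hg1, hg2⟩ := hf.aestronglyMeasurable
        exact condExp_of_aestronglyMeasurable' le_rfl ⟨g, hg1, hg2⟩ hfint
      have : ∫ ω, (f ω - (μ[f|m (↑(∅ : Finset ι))]) ω) ^ 2 ∂μ = 0 := by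
        rw [show ∫ ω, (f ω - (μ[f|m (↑(∅ : Finset ι))]) ω) ^ 2 ∂μ = ∫ _, (0 : ℝ) ∂μ from
          integral_congr_ae (by filter_upwards [hid] with x hx; rw [hx]; ring)]
        simp
      rw [Finset.sum_empty, this]
  | @insert u Λ hu ih =>
      have hsubΛ : (↑Λ : Set ι) ⊆ ↑(insert u Λ) := Finset.coe_subset.2 (Finset.subset_insert u Λ)
      have hsubu : ({u} : Set ι) ⊆ ↑(insert u Λ) := by
        intro x hx
        rw [Set.mem_singleton_iff] at hx
        subst hx
        simp
      have hinsΛ : m ↑(insert u Λ) ≤ m ↑Λ := hmono hsubΛ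
      have hinsu : m ↑(insert u Λ) ≤ m {u} := hmono hsubu
      have hset : ((↑(insert u Λ) : Set ι))ᶜ ∪ {u} = ((↑Λ : Set ι))ᶜ := by
        ext x
        simp only [Set.mem_union, Set.mem_compl_iff, Finset.coe_insert, Set.mem_insert_iff,
          Set.mem_singleton_iff, Finset.mem_coe]
        constructor
        · rintro (hx | rfl)
          · exact fun hxΛ => hx (Or.inr hxΛ)
          · exact fun hxΛ => hu hxΛ
        · intro hxΛ
          by_cases hxu : x = u
          · exact Or.inr hxu
          · exact Or.inl (fun hc => hc.elim hxu hxΛ)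
      have hsupΛ : m ↑Λ = m ↑(insert u Λ) ⊔
          MeasurableSpace.comap (fun ω : ∀ i, Ωi i => ω u) inferInstance := by
        rw [hm (↑Λ : Set ι), hm (↑(insert u Λ) : Set ι), ← hset, iSup_union, iSup_singleton]
      have hIndepBC : ProbabilityTheory.Indep
          (MeasurableSpace.comap (fun ω : ∀ i, Ωi i => ω u) inferInstance) (m {u}) μ := by
        have h2 := ProbabilityTheory.indep_biSup_compl h_le hiIndep ({u} : Set ι)
        rw [hm ({u} : Set ι)]
        simpa [iSup_singleton] using h2
      have hcomm : μ[μ[f|m ({u} : Set ι)]|m ↑Λ] =ᵐ[μ] μ[f|m ↑(insert u Λ)] := by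
        have hC := Stmt19Aux.condexp_sup_indep (hmle ↑(insert u Λ)) (h_le u) (hmle {u}) hinsu
          hIndepBC (h := μ[f|m ({u} : Set ι)]) integrable_condExp
          stronglyMeasurable_condExp.aestronglyMeasurable
        rw [← hsupΛ] at hC
        exact hC.trans (condExp_condExp_of_le hinsu (hmle {u}))
      have hQmem : MemLp (μ[f|m ↑(insert u Λ)]) 2 μ := hPmem _
      have hgmem : MemLp (fun x => f x - (μ[f|m ↑(insert u Λ)]) x) 2 μ := hf.sub hQmem
      have hQfix : μ[μ[f|m ↑(insert u Λ)]|m ↑Λ] = μ[f|m ↑(insert u Λ)] :=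
        condExp_of_stronglyMeasurable (hmle ↑Λ)
          (stronglyMeasurable_condExp.mono hinsΛ) integrable_condExp
      have hPg : μ[(fun x => f x - (μ[f|m ↑(insert u Λ)]) x)|m ↑Λ] =ᵐ[μ]
          fun x => (μ[f|m ↑Λ]) x - (μ[f|m ↑(insert u Λ)]) x := by
        have h1 : μ[f - μ[f|m ↑(insert u Λ)]|m ↑Λ] =ᵐ[μ]
            μ[f|m ↑Λ] - μ[μ[f|m ↑(insert u Λ)]|m ↑Λ] := condExp_sub hfint integrable_condExp _
        rw [hQfix] at h1
        exact h1
      have hpy : ∫ x, ((f x - (μ[f|m ↑(insert u Λ)]) x) -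
            (μ[(fun x => f x - (μ[f|m ↑(insert u Λ)]) x)|m ↑Λ]) x) ^ 2 ∂μ
          = ∫ x, (f x - (μ[f|m ↑(insert u Λ)]) x) ^ 2 ∂μ -
            ∫ x, (μ[(fun x => f x - (μ[f|m ↑(insert u Λ)]) x)|m ↑Λ]) x ^ 2 ∂μ :=
        Stmt19Aux.integral_sq_sub_condexp (hmle ↑Λ) hgmem
      have e1 : ∫ x, ((f x - (μ[f|m ↑(insert u Λ)]) x) -
            (μ[(fun x => f x - (μ[f|m ↑(insert u Λ)]) x)|m ↑Λ]) x) ^ 2 ∂μ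
          = ∫ x, (f x - (μ[f|m ↑Λ]) x) ^ 2 ∂μ :=
        integral_congr_ae (by filter_upwards [hPg] with x hx; rw [hx]; ring)
      have hRsub : μ[(fun x => f x - (μ[f|m ({u} : Set ι)]) x)|m ↑Λ] =ᵐ[μ]
          fun x => (μ[f|m ↑Λ]) x - (μ[f|m ↑(insert u Λ)]) x := by
        have h1 : μ[f - μ[f|m ({u} : Set ι)]|m ↑Λ] =ᵐ[μ]
            μ[f|m ↑Λ] - μ[μ[f|m ({u} : Set ι)]|m ↑Λ] := condExp_sub hfint integrable_condExp _
        refine h1.trans ?_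
        filter_upwards [hcomm] with x hx
        simp only [Pi.sub_apply]
        rw [hx]
      have e2 : ∫ x, (μ[(fun x => f x - (μ[f|m ↑(insert u Λ)]) x)|m ↑Λ]) x ^ 2 ∂μ
          = ∫ x, (μ[(fun x => f x - (μ[f|m ({u} : Set ι)]) x)|m ↑Λ]) x ^ 2 ∂μ :=
        integral_congr_ae (by filter_upwards [hPg, hRsub] with x h1 h2; rw [h1, h2])
      have e3 : ∫ x, (μ[(fun x => f x - (μ[f|m ({u} : Set ι)]) x)|m ↑Λ]) x ^ 2 ∂μ
          ≤ ∫ x, (f x - (μ[f|m ({u} : Set ι)]) x) ^ 2 ∂μ :=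
        Stmt19Aux.integral_sq_condexp_le (hmle ↑Λ) (hf.sub (hPmem _))
      rw [Finset.sum_insert hu]
      linarith [hpy, e1, e2, e3, ih]
end
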